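/- arXiv:math/0009170 — 8 statements merged into one kernel-verified Lean document; each statement's English description precedes it below -/
import Mathlib

section
/- Let k be a commutative unital ring, A a unital k-algebra, qA = (A[[λ]], ⋆) a formal deformation of A with a ⋆ b = Σ_{r≥0} C_r(a,b) λ^r, P_0 ∈ M_n(A) an idempotent, and P ∈ M_n(A)[[λ]] a ⋆-idempotent deforming P_0. Consider E = P_0 A^n (column vectors x with P_0 x = x) and the deformed right module structure on E[[λ]] defined by x • a := I^{-1}(P ⋆ x ⋆ a), where I(y) = P ⋆ y ⋆ 1 is the isomorphism from (P_0 A^n)[[λ]] onto P ⋆ A^n[[λ]] given by y ↦ P ⋆ y (column vectors, entrywise ⋆-operations). Write x • a = Σ_{r≥0} R_r(x,a) λ^r for x ∈ E, a ∈ A. Then the first-order term is R_1(x,a) = P_0 C_1(x,a), where C_1(x,a) ∈ A^n is defined componentwise by C_1(x,a)_i = C_1(x_i, a); in particular R_1 does not depend on the choice of the ⋆-idempotent P deforming P_0. -/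
open scoped Matrix

/-- Cauchy-type convolution of two formal series along a family of
coefficient maps `B r : M → N → P`:  `(x ⋆ y) n = ∑_{r+i+j=n} B r (x i) (y j)`. -/
def fdConv {M N P : Type*} [AddCommMonoid P] (B : ℕ → M → N → P)
    (x : ℕ → M) (y : ℕ → N) : ℕ → P := fun n =>
  ∑ p ∈ Finset.HasAntidiagonal.antidiagonal n, ∑ q ∈ Finset.HasAntidiagonal.antidiagonal p.2, B p.1 (x q.1) (y q.2)

/-- The unit formal series `1 + 0·λ + 0·λ² + ⋯`. -/
def fdOne (A : Type*) [One A] [Zero A] : ℕ → A := fun n => if n = 0 then 1 else 0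

/-- An element viewed as a constant (order-zero) formal series. -/
def fdC {A : Type*} [Zero A] (a : A) : ℕ → A := fun n => if n = 0 then a else 0

/-- Coefficientwise star of a formal series. -/
def fdStar {A : Type*} [Star A] (x : ℕ → A) : ℕ → A := fun n => star (x n)

/-- Action of a scalar series `c ∈ k[[λ]]` on series with coefficients in a `k`-module. -/
def fdSmul {k M : Type*} [Semiring k] [AddCommMonoid M] [Module k M]
    (c : ℕ → k) (x : ℕ → M) : ℕ → M := fun n =>
  ∑ p ∈ Finset.HasAntidiagonal.antidiagonal n, c p.1 • x p.2

/-- Order-by-order extension of a family of maps `T r : E → F` to formal series: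
`(T x) n = ∑_{r+j=n} T r (x j)`. -/
def fdMap {E F : Type*} [AddCommMonoid F] (T : ℕ → E → F) (x : ℕ → E) : ℕ → F :=
  fun n => ∑ p ∈ Finset.HasAntidiagonal.antidiagonal n, T p.1 (x p.2)

/-- A formal deformation (à la Gerstenhaber) of a unital `k`-algebra `A`:
a family of `k`-bilinear cochains `C r` with `C 0` the original product, whose
convolution product on `A[[λ]]` is associative and unital (with the same unit). -/
structure FormalDeformation (k A : Type*) [CommRing k] [Ring A] [Algebra k A] where
  C : ℕ → A →ₗ[k] A →ₗ[k] A
  C_zero : ∀ a b : A, C 0 a b = a * b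
  assoc : ∀ x y z : ℕ → A,
    fdConv (fun r a b => C r a b) (fdConv (fun r a b => C r a b) x y) z =
      fdConv (fun r a b => C r a b) x (fdConv (fun r a b => C r a b) y z)
  one_mul : ∀ x : ℕ → A, fdConv (fun r a b => C r a b) (fdOne A) x = x
  mul_one : ∀ x : ℕ → A, fdConv (fun r a b => C r a b) x (fdOne A) = x

namespace FormalDeformation

variable {k A : Type*} [CommRing k] [Ring A] [Algebra k A]

/-- The deformed product on `A[[λ]]`. -/
def mul (D : FormalDeformation k A) : (ℕ → A) → (ℕ → A) → ℕ → A :=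
  fdConv fun r a b => D.C r a b

/-- A deformation of a `*`-algebra is Hermitian if the coefficientwise extension of
the involution is still an involution for the deformed product. -/
def IsHermitian [StarRing A] (D : FormalDeformation k A) : Prop :=
  ∀ x y : ℕ → A, fdStar (D.mul x y) = D.mul (fdStar y) (fdStar x)

/-- The extension of the deformation cochains to matrices. -/
def matC (D : FormalDeformation k A) (n : ℕ) (r : ℕ)
    (L S : Matrix (Fin n) (Fin n) A) : Matrix (Fin n) (Fin n) A :=
  Matrix.of fun i j => ∑ s, D.C r (L i s) (S s j)

/-- The deformed product on `M_n(A)[[λ]] = M_n(A[[λ]])`. -/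
def matMul (D : FormalDeformation k A) (n : ℕ) :
    (ℕ → Matrix (Fin n) (Fin n) A) → (ℕ → Matrix (Fin n) (Fin n) A) →
      ℕ → Matrix (Fin n) (Fin n) A :=
  fdConv (D.matC n)

/-- The deformed left action of `M_n(A)[[λ]]` on column vectors `A^n[[λ]]`. -/
def mvMul (D : FormalDeformation k A) (n : ℕ) :
    (ℕ → Matrix (Fin n) (Fin n) A) → (ℕ → Fin n → A) → ℕ → Fin n → A :=
  fdConv fun r L v => fun i => ∑ j, D.C r (L i j) (v j)

/-- The deformed right action of `A[[λ]]` on column vectors `A^n[[λ]]`. -/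
def vsMul (D : FormalDeformation k A) (n : ℕ) :
    (ℕ → Fin n → A) → (ℕ → A) → ℕ → Fin n → A :=
  fdConv fun r v a => fun i => D.C r (v i) a

end FormalDeformation

/-- Equation (14), "RoneTerm". For the deformed module structure
`x • a = I⁻¹(P ⋆ x ⋆ a)` on `E[[λ]] = (P₀Aⁿ)[[λ]]` (where `I(y) = P ⋆ y`), the
first-order term of the deformed action is `R₁(x, a) = P₀ C₁(x, a)`; in particular
it does not depend on the chosen ⋆-idempotent `P` deforming `P₀`. -/
theorem first_order_term_of_deformed_action {k A : Type*} [CommRing k] [Ring A]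
    [Algebra k A]
    (D : FormalDeformation k A) (n : ℕ)
    (P₀ : Matrix (Fin n) (Fin n) A) (hP₀ : P₀ * P₀ = P₀)
    (P : ℕ → Matrix (Fin n) (Fin n) A)
    (hP : D.matMul n P P = P) (hP0 : P 0 = P₀)
    (x : Fin n → A) (hx : P₀.mulVec x = x) (a : A)
    -- z = x • a = I⁻¹(P ⋆ x ⋆ a): the unique corner series with I(z) = P ⋆ x ⋆ a
    (z : ℕ → Fin n → A) (hz : ∀ m, P₀.mulVec (z m) = z m)
    (hzdef : D.mvMul n P z = D.mvMul n P (D.vsMul n (fdC x) (fdC a))) :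
    z 1 = P₀.mulVec fun i => D.C 1 (x i) a := by

  classical
  have ha0 : (Finset.HasAntidiagonal.antidiagonal 0 : Finset (ℕ×ℕ)) = {(0,0)} := by decide
  have ha1 : (Finset.HasAntidiagonal.antidiagonal 1 : Finset (ℕ×ℕ)) = {(0,1),(1,0)} := by decide
  have hw : ∀ m, D.vsMul n (fdC x) (fdC a) m = fun i => D.C m (x i) a := by
    intro m
    funext i
    unfold FormalDeformation.vsMul fdConv fdC
    rw [Finset.sum_eq_single (m, 0)]
    · rw [show (Finset.HasAntidiagonal.antidiagonal (0:ℕ)) = {(0,0)} from ha0, Finset.sum_singleton]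
      simp
    · rintro ⟨p1, p2⟩ hp hne
      rw [Finset.HasAntidiagonal.mem_antidiagonal] at hp
      apply Finset.sum_eq_zero
      rintro ⟨q1, q2⟩ hq
      rw [Finset.HasAntidiagonal.mem_antidiagonal] at hq
      have : q1 ≠ 0 ∨ q2 ≠ 0 := by
        by_contra h
        push_neg at h
        apply hne
        simp [h.1, h.2] at hq
        simp [← hp, hq]
      rcases this with h | h <;> · funext i'; simp [if_neg h]
    · intro h
      exact absurd (Finset.HasAntidiagonal.mem_antidiagonal.2 (by simp)) h
  have h0 := congrFun hzdef 0
  have h1 := congrFun hzdef 1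
  simp only [FormalDeformation.mvMul, fdConv, ha0, ha1, hw, hP0,
    Finset.sum_pair (show ((0:ℕ),(1:ℕ)) ≠ (1,0) by decide),
    Finset.sum_singleton] at h0 h1
  have hz0 : z 0 = fun i => x i * a := by
    have h := h0
    simp only [D.C_zero] at h
    have hL : (fun i => ∑ j, P₀ i j * z 0 j) = P₀.mulVec (z 0) := by
      funext i; simp [Matrix.mulVec, dotProduct]
    have hR : (fun i => ∑ j, P₀ i j * (x j * a)) = P₀.mulVec (fun j => x j * a) := by
      funext i; simp [Matrix.mulVec, dotProduct]
    rw [hL, hR, hz 0] at h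
    rw [h]
    funext i
    have h2 : P₀.mulVec (fun j => x j * a) i = (P₀.mulVec x i) * a := by
      simp [Matrix.mulVec, dotProduct, Finset.sum_mul, mul_assoc]
    rw [h2, hx]
  simp only [hz0] at h1
  have key : (fun i => ∑ j, D.C 0 (P₀ i j) (z 1 j)) =
      fun i => ∑ j, D.C 0 (P₀ i j) (D.C 1 (x j) a) := by
    funext i
    have h := congrFun h1 i
    simp only [Pi.add_apply] at h
    simp only [D.C_zero] at h ⊢
    exact add_right_cancel (add_right_cancel h)
  have hL : (fun i => ∑ j, D.C 0 (P₀ i j) (z 1 j)) = P₀.mulVec (z 1) := by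
    funext i; simp [D.C_zero, Matrix.mulVec, dotProduct]
  have hR : (fun i => ∑ j, D.C 0 (P₀ i j) (D.C 1 (x j) a)) =
      P₀.mulVec (fun j => D.C 1 (x j) a) := by
    funext i; simp [D.C_zero, Matrix.mulVec, dotProduct]
  rw [hL, hR, hz 1] at key
  exact key
end

section
/- Let k be a commutative unital ring, A a unital k-algebra, qA = (A[[λ]], ⋆) a formal deformation of A with a ⋆ b = Σ_{r≥0} C_r(a,b) λ^r, P_0 ∈ M_n(A) an idempotent, and P ∈ M_n(A)[[λ]] a ⋆-idempotent deforming P_0. Let •' be the transported deformation of the algebra P_0 M_n(A) P_0 defined by a •' b := I^{-1}(I(a) ⋆ I(b)), where I(B) = P ⋆ B ⋆ P, and write L •' S = Σ_{r≥0} B_r(L,S) λ^r for L, S ∈ P_0 M_n(A) P_0. Then the first-order term is B_1(L, S) = P_0 C_1(L, S) P_0, where C_1 on matrices is defined by (C_1(L,S))_{ij} = Σ_{r=1}^n C_1(L_{ir}, S_{rj}). -/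
open scoped Matrix

section Helpers
variable {M N P : Type*} [AddCommMonoid P]

theorem fdConv_zero' (B : ℕ → M → N → P) (x : ℕ → M) (y : ℕ → N) :
    fdConv B x y 0 = B 0 (x 0) (y 0) := by
  simp [fdConv]

theorem fdConv_one' (B : ℕ → M → N → P) (x : ℕ → M) (y : ℕ → N) :
    fdConv B x y 1 = B 0 (x 0) (y 1) + B 1 (x 0) (y 0) + B 0 (x 1) (y 0) := by
  rw [fdConv, show (Finset.HasAntidiagonal.antidiagonal 1 : Finset (ℕ×ℕ)) = {(0,1),(1,0)} from rfl]
  rw [Finset.sum_insert (by decide), Finset.sum_singleton]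
  rw [show (Finset.HasAntidiagonal.antidiagonal 1 : Finset (ℕ×ℕ)) = {(0,1),(1,0)} from rfl]
  rw [Finset.sum_insert (by decide), Finset.sum_singleton]
  simp only [fdConv, Finset.Nat.antidiagonal_zero, Finset.sum_singleton]
  abel

theorem fdC_zero'' {A : Type*} [Zero A] (a : A) : fdC a 0 = a := rfl
theorem fdC_one'' {A : Type*} [Zero A] (a : A) : fdC a 1 = 0 := rfl

end Helpers

section Cocycle
variable {k A : Type*} [CommRing k] [Ring A] [Algebra k A]

theorem scalar_cocycle (D : FormalDeformation k A) (a b c : A) :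
    D.C 1 (a*b) c + D.C 1 a b * c = a * D.C 1 b c + D.C 1 a (b*c) := by
  have h := congrFun (D.assoc (fdC a) (fdC b) (fdC c)) 1
  simpa only [fdConv_zero', fdConv_one', fdC_zero'', fdC_one'', D.C_zero, map_zero,
    LinearMap.zero_apply, mul_zero, zero_mul, add_zero, zero_add] using h

theorem matC_zero' (D : FormalDeformation k A) (n : ℕ)
    (L S : Matrix (Fin n) (Fin n) A) : D.matC n 0 L S = L * S := by
  ext i j
  simp [FormalDeformation.matC, D.C_zero, Matrix.mul_apply]

theorem matC_cocycle (D : FormalDeformation k A) (n : ℕ)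
    (L S T : Matrix (Fin n) (Fin n) A) :
    D.matC n 1 (L*S) T + D.matC n 1 L S * T
      = L * D.matC n 1 S T + D.matC n 1 L (S*T) := by
  ext i j
  simp only [FormalDeformation.matC, Matrix.add_apply, Matrix.mul_apply, Matrix.of_apply,
    Finset.sum_mul, Finset.mul_sum, map_sum, LinearMap.coe_sum, Finset.sum_apply]
  simp only [← Finset.sum_add_distrib]
  rw [Finset.sum_comm]
  refine Finset.sum_congr rfl fun s _ => Finset.sum_congr rfl fun t _ => ?_
  exact scalar_cocycle D (L i s) (S s t) (T t j)
end Cocycle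

/-- For the deformation `•'` of `P₀Mₙ(A)P₀` transported via
`I(B) = P ⋆ B ⋆ P`, the first-order term is `B₁(L, S) = P₀ C₁(L, S) P₀`. -/
theorem first_order_term_of_corner_product {k A : Type*} [CommRing k] [Ring A]
    [Algebra k A]
    (D : FormalDeformation k A) (n : ℕ)
    (P₀ : Matrix (Fin n) (Fin n) A) (hP₀ : P₀ * P₀ = P₀)
    (P : ℕ → Matrix (Fin n) (Fin n) A)
    (hP : D.matMul n P P = P) (hP0 : P 0 = P₀)
    (L S : Matrix (Fin n) (Fin n) A)
    (hL : P₀ * L * P₀ = L) (hS : P₀ * S * P₀ = S)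
    -- B = L •' S = I⁻¹(I(L) ⋆ I(S)): the unique corner series with I(B) = I(L) ⋆ I(S)
    (B : ℕ → Matrix (Fin n) (Fin n) A) (hB : ∀ m, P₀ * B m * P₀ = B m)
    (hBdef : D.matMul n (D.matMul n P B) P =
      D.matMul n (D.matMul n (D.matMul n P (fdC L)) P)
        (D.matMul n (D.matMul n P (fdC S)) P)) :
    B 1 = P₀ * D.matC n 1 L S * P₀ := by
  have hq := congrFun hP 1
  have h0 := congrFun hBdef 0
  have h1 := congrFun hBdef 1
  simp only [FormalDeformation.matMul, fdConv_zero', fdConv_one', matC_zero', fdC_zero'',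
    fdC_one'', hP0, mul_zero, zero_add, add_zero, zero_mul] at hq h0 h1
  -- corner absorption facts
  have hPL : P₀ * L = L := by rw [← hL, ← mul_assoc, ← mul_assoc, hP₀]
  have hLP : L * P₀ = L := by rw [← hL, mul_assoc, hP₀]
  have hPS : P₀ * S = S := by rw [← hS, ← mul_assoc, ← mul_assoc, hP₀]
  have hSP : S * P₀ = S := by rw [← hS, mul_assoc, hP₀]
  rw [hL, hS, hB 0] at h0
  rw [h0] at h1
  have hPB1 : P₀ * B 1 = B 1 := by rw [← hB 1, ← mul_assoc, ← mul_assoc, hP₀]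
  have hB1P : B 1 * P₀ = B 1 := by rw [← hB 1, mul_assoc, hP₀]
  have hPLS : ∀ x : Matrix (Fin n) (Fin n) A, P₀ * (L * x) = L * x := by
    intro x; rw [← mul_assoc, hPL]
  have hLPx : ∀ x : Matrix (Fin n) (Fin n) A, L * (P₀ * x) = L * x := by
    intro x; rw [← mul_assoc, hLP]
  have hxSP : ∀ x : Matrix (Fin n) (Fin n) A, x * S * P₀ = x * S := by
    intro x; rw [mul_assoc, hSP]
  have hxLP : ∀ x : Matrix (Fin n) (Fin n) A, x * L * P₀ = x * L := by
    intro x; rw [mul_assoc, hLP]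
  have hxLSP : ∀ x : Matrix (Fin n) (Fin n) A, x * (L * S) * P₀ = x * (L * S) := by
    intro x; rw [mul_assoc, mul_assoc, hSP]
  have hxPS : ∀ x : Matrix (Fin n) (Fin n) A, x * P₀ * S = x * S := by
    intro x; rw [mul_assoc, hPS]
  have hLSP : L * S * P₀ = L * S := by rw [mul_assoc, hSP]
  simp only [hPL, hLP, hPS, hSP, hPB1, hB1P, hPLS, hxSP, hxLP, hxLSP, hxPS,
    mul_add, add_mul, hL, hS] at h1
  -- idempotent first-order relation
  have hPP' : ∀ x : Matrix (Fin n) (Fin n) A, x * P₀ * P₀ = x * P₀ := by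
    intro x; rw [mul_assoc, hP₀]
  have e := congrArg (fun X => P₀ * X * P₀) hq
  simp only [mul_add, add_mul, ← mul_assoc, hP₀, hPP'] at e
  have e2 : P₀ * P 1 * P₀ + P₀ * D.matC n 1 P₀ P₀ * P₀ = 0 := by
    have e3 := e
    conv_rhs at e3 => rw [← zero_add (P₀ * P 1 * P₀)]
    exact add_right_cancel e3
  have sPP : P₀ * P 1 * P₀ = -(P₀ * D.matC n 1 P₀ P₀ * P₀) :=
    eq_neg_of_add_eq_zero_left e2
  -- cocycle consequences
  have s2 : D.matC n 1 P₀ P₀ * S = P₀ * D.matC n 1 P₀ S := by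
    have e := matC_cocycle D n P₀ P₀ S
    rw [hP₀, hPS, add_comm (D.matC n 1 P₀ S)] at e
    exact add_right_cancel e
  have s3 : D.matC n 1 L P₀ * S = L * D.matC n 1 P₀ S := by
    have e := matC_cocycle D n L P₀ S
    rw [hLP, hPS, add_comm (D.matC n 1 L S)] at e
    exact add_right_cancel e
  have s4 : D.matC n 1 (L * S) P₀
      = L * D.matC n 1 S P₀ + D.matC n 1 L S - D.matC n 1 L S * P₀ := by
    have e := matC_cocycle D n L S P₀
    rw [hSP] at e
    exact eq_sub_of_add_eq e
  have s5 : D.matC n 1 P₀ L * S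
      = P₀ * D.matC n 1 L S + D.matC n 1 P₀ (L * S) - D.matC n 1 L S := by
    have e := matC_cocycle D n P₀ L S
    rw [hPL, add_comm (D.matC n 1 L S)] at e
    exact eq_sub_of_add_eq e
  have s6 : D.matC n 1 P₀ (L * S) * P₀
      = P₀ * D.matC n 1 (L * S) P₀ + D.matC n 1 P₀ (L * S) - D.matC n 1 (L * S) P₀ := by
    have e := matC_cocycle D n P₀ (L * S) P₀
    rw [hPLS, hLSP, add_comm (D.matC n 1 (L * S) P₀)] at e
    exact eq_sub_of_add_eq e
  rw [s4] at s6
  -- P1 corner relations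
  have k1 : ∀ X Y : Matrix (Fin n) (Fin n) A, X * P₀ = X → P₀ * Y = Y →
      X * (P 1 * Y) = -(X * (D.matC n 1 P₀ P₀ * Y)) := by
    intro X Y hX hY
    calc X * (P 1 * Y) = (X * P₀) * (P 1 * (P₀ * Y)) := by rw [hX, hY]
      _ = X * (P₀ * P 1 * P₀ * Y) := by noncomm_ring
      _ = X * (-(P₀ * D.matC n 1 P₀ P₀ * P₀) * Y) := by rw [sPP]
      _ = -((X * P₀) * (D.matC n 1 P₀ P₀ * (P₀ * Y))) := by noncomm_ring
      _ = -(X * (D.matC n 1 P₀ P₀ * Y)) := by rw [hX, hY]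
  have k1a : L * (P 1 * S) = -(L * D.matC n 1 P₀ S) := by
    have e := k1 L S hLP hPS
    rw [s2, hLPx] at e
    exact e
  have k1b : L * P 1 * S = -(L * D.matC n 1 P₀ S) := by rw [mul_assoc]; exact k1a
  have s7 : L * (D.matC n 1 P₀ S * P₀) = L * D.matC n 1 P₀ S := by
    calc L * (D.matC n 1 P₀ S * P₀) = L * D.matC n 1 P₀ S * P₀ := by rw [mul_assoc]
      _ = D.matC n 1 L P₀ * S * P₀ := by rw [s3]
      _ = D.matC n 1 L P₀ * S := hxSP _
      _ = L * D.matC n 1 P₀ S := s3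
  rw [k1a, k1b, s7, s3, s5, s4, s6] at h1
  simp only [mul_add, mul_sub, hPLS] at h1
  rw [← sub_eq_zero] at h1 ⊢
  rw [← h1]
  noncomm_ring
end

section
/- Let k be a commutative unital ring in which 2 is invertible, A a commutative unital k-algebra, and qA = (A[[λ]], ⋆) a formal deformation of A whose first-order term C_1 is skew-symmetric (C_1(a,b) = −C_1(b,a)). Let P_0 ∈ M_n(A) be an idempotent. Define on matrices {L, S} := C_1(L,S) − C_1(S,L), where (C_1(L,S))_{ij} = Σ_r C_1(L_{ir}, S_{rj}), and on A the bracket {f, g} := C_1(f,g) − C_1(g,f). Then for all f, g ∈ A one has P_0 { f P_0, g P_0 } P_0 = { f, g } P_0; that is, the bracket induced on the center { f P_0 : f ∈ A } of P_0 M_n(A) P_0 by the transported deformation coincides with the original bracket on A under the identification f ↦ f P_0. -/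
open scoped Matrix

section Aux

variable {k A : Type*} [CommRing k] [CommRing A] [Algebra k A]

lemma fd_cocycle (D : FormalDeformation k A) (a b c : A) :
    D.C 1 (a*b) c + D.C 1 a b * c = D.C 1 a (b*c) + a * D.C 1 b c := by
  have h := congrFun (D.assoc (fdC a) (fdC b) (fdC c)) 1
  simp [fdConv, fdC, show Finset.HasAntidiagonal.antidiagonal (1:ℕ) = {(0,1),(1,0)} from rfl,
    show Finset.HasAntidiagonal.antidiagonal (0:ℕ) = {(0,0)} from rfl, D.C_zero] at h
  linear_combination h

lemma fd_leib1 [Invertible (2 : k)] (D : FormalDeformation k A)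
    (hskew : ∀ a b : A, D.C 1 a b = - D.C 1 b a) (a b c : A) :
    D.C 1 (a*b) c = a * D.C 1 b c + b * D.C 1 a c := by
  have h2 : Invertible (2 : A) := by
    have := Invertible.map (algebraMap k A) (2 : k)
    rwa [map_ofNat] at this
  have e1 := fd_cocycle D a b c
  have e2 := fd_cocycle D b c a
  have e3 := fd_cocycle D c a b
  have key : 2 * D.C 1 (a*b) c = 2 * (a * D.C 1 b c + b * D.C 1 a c) := by
    have s1 := hskew a (b*c)
    have s2 := hskew b (c*a)
    have s3 := hskew c (a*b)
    have s6 := hskew c a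
    linear_combination e1 - e2 + e3 + s1 - s2 + s3 - 2*b*s6
  calc D.C 1 (a*b) c = ⅟(2:A) * (2 * D.C 1 (a*b) c) := by
        rw [← mul_assoc, invOf_mul_self, _root_.one_mul]
    _ = ⅟(2:A) * (2 * (a * D.C 1 b c + b * D.C 1 a c)) := by rw [key]
    _ = _ := by rw [← mul_assoc, invOf_mul_self, _root_.one_mul]

lemma fd_leib2 [Invertible (2 : k)] (D : FormalDeformation k A)
    (hskew : ∀ a b : A, D.C 1 a b = - D.C 1 b a) (a b c : A) :
    D.C 1 a (b*c) = b * D.C 1 a c + c * D.C 1 a b := by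
  rw [hskew a (b*c), fd_leib1 D hskew b c a, hskew a c, hskew a b]; ring

end Aux
/-- For a deformation of a commutative algebra with skew-symmetric
first-order term `C₁` and an idempotent `P₀ ∈ Mₙ(A)`, the bracket induced on the
center `{f P₀ : f ∈ A}` of `P₀Mₙ(A)P₀` coincides with the original bracket on `A`:
`P₀ {f P₀, g P₀} P₀ = {f, g} P₀`. -/
theorem center_bracket_coincides {k A : Type*} [CommRing k] [Invertible (2 : k)]
    [CommRing A] [Algebra k A]
    (D : FormalDeformation k A)
    (hskew : ∀ a b : A, D.C 1 a b = - D.C 1 b a)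
    (n : ℕ) (P₀ : Matrix (Fin n) (Fin n) A) (hP₀ : P₀ * P₀ = P₀)
    (f g : A) :
    P₀ * (D.matC n 1 (f • P₀) (g • P₀) - D.matC n 1 (g • P₀) (f • P₀)) * P₀ =
      (D.C 1 f g - D.C 1 g f) • P₀ := by
  set X : Matrix (Fin n) (Fin n) A := Matrix.of fun i j => D.C 1 (P₀ i j) g with hXdef
  set Y : Matrix (Fin n) (Fin n) A := Matrix.of fun i j => D.C 1 (P₀ i j) f with hYdef
  have hP : ∀ i j, P₀ i j = ∑ s, P₀ i s * P₀ s j := by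
    intro i j; rw [← Matrix.mul_apply, hP₀]
  have hX : P₀ * X + X * P₀ = X := by
    ext i j
    simp only [Matrix.add_apply, Matrix.mul_apply, hXdef, Matrix.of_apply]
    rw [hP i j]
    simp only [map_sum, LinearMap.sum_apply]
    rw [← Finset.sum_add_distrib]
    exact (Finset.sum_congr rfl fun s _ => by rw [fd_leib1 D hskew]; ring).symm
  have hY : P₀ * Y + Y * P₀ = Y := by
    ext i j
    simp only [Matrix.add_apply, Matrix.mul_apply, hYdef, Matrix.of_apply]
    rw [hP i j]
    simp only [map_sum, LinearMap.sum_apply]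
    rw [← Finset.sum_add_distrib]
    exact (Finset.sum_congr rfl fun s _ => by rw [fd_leib1 D hskew]; ring).symm
  have hPXP : P₀ * X * P₀ = 0 := by
    have h := congrArg (fun M => P₀ * M * P₀) hX
    simp only [Matrix.mul_add, Matrix.add_mul] at h
    rw [show P₀ * (P₀ * X) * P₀ = P₀ * X * P₀ by rw [← Matrix.mul_assoc, hP₀],
        show P₀ * (X * P₀) * P₀ = P₀ * X * P₀ by
          rw [Matrix.mul_assoc, Matrix.mul_assoc, hP₀, ← Matrix.mul_assoc]] at h
    exact left_eq_add.mp h.symm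
  have hPYP : P₀ * Y * P₀ = 0 := by
    have h := congrArg (fun M => P₀ * M * P₀) hY
    simp only [Matrix.mul_add, Matrix.add_mul] at h
    rw [show P₀ * (P₀ * Y) * P₀ = P₀ * Y * P₀ by rw [← Matrix.mul_assoc, hP₀],
        show P₀ * (Y * P₀) * P₀ = P₀ * Y * P₀ by
          rw [Matrix.mul_assoc, Matrix.mul_assoc, hP₀, ← Matrix.mul_assoc]] at h
    exact left_eq_add.mp h.symm
  have hΔ : D.matC n 1 (f • P₀) (g • P₀) - D.matC n 1 (g • P₀) (f • P₀)
      = f • (P₀ * X + X * P₀) - g • (P₀ * Y + Y * P₀)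
        + (D.C 1 f g - D.C 1 g f) • (P₀ * P₀) := by
    ext i j
    simp only [Matrix.sub_apply, Matrix.add_apply, Matrix.smul_apply, Matrix.mul_apply,
      FormalDeformation.matC, Matrix.of_apply, smul_eq_mul, hXdef, hYdef]
    have hterm : ∀ s, D.C 1 (f * P₀ i s) (g * P₀ s j) - D.C 1 (g * P₀ i s) (f * P₀ s j)
        = f * (P₀ i s * D.C 1 (P₀ s j) g + D.C 1 (P₀ i s) g * P₀ s j)
          - g * (P₀ i s * D.C 1 (P₀ s j) f + D.C 1 (P₀ i s) f * P₀ s j)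
          + (D.C 1 f g - D.C 1 g f) * (P₀ i s * P₀ s j) := by
      intro s
      rw [fd_leib1 D hskew f (P₀ i s) (g * P₀ s j), fd_leib1 D hskew g (P₀ i s) (f * P₀ s j),
        fd_leib2 D hskew (P₀ i s) g (P₀ s j), fd_leib2 D hskew (P₀ i s) f (P₀ s j),
        fd_leib2 D hskew f g (P₀ s j), fd_leib2 D hskew g f (P₀ s j),
        hskew f (P₀ s j), hskew g (P₀ s j)]
      ring
    rw [← Finset.sum_sub_distrib, Finset.sum_congr rfl fun s _ => hterm s]
    simp only [mul_add, Finset.mul_sum, Finset.sum_add_distrib, Finset.sum_sub_distrib]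
  rw [hΔ, hX, hY, hP₀]
  calc P₀ * (f • X - g • Y + (D.C 1 f g - D.C 1 g f) • P₀) * P₀
      = f • (P₀ * X * P₀) - g • (P₀ * Y * P₀)
        + (D.C 1 f g - D.C 1 g f) • (P₀ * P₀ * P₀) := by
        rw [Matrix.mul_add, Matrix.add_mul, Matrix.mul_sub, Matrix.sub_mul,
          Matrix.mul_smul, Matrix.mul_smul, Matrix.mul_smul,
          Matrix.smul_mul, Matrix.smul_mul, Matrix.smul_mul]
    _ = (D.C 1 f g - D.C 1 g f) • P₀ := by rw [hPXP, hPYP, hP₀, hP₀]; simp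
end

section
/- Let k be a commutative unital ring, A a commutative unital k-algebra, and qA = (A[[λ]], ⋆) a formal deformation of A with first-order term C_1. Define {f, g} := C_1(f,g) − C_1(g,f) for f, g ∈ A. Let P_0 ∈ M_n(A) be an idempotent, E = P_0 A^n, and define {x, a}_E := P_0 · ({x_1, a}, …, {x_n, a})^T ∈ E for x ∈ E, a ∈ A. Then the bracket {·,·}_E satisfies the Leibniz rules of a right Poisson module: {x · c, a}_E = {x, a}_E · c + x · {c, a} and {x, ab}_E = {x, a}_E · b + {x, b}_E · a, for all x ∈ E and a, b, c ∈ A. -/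
open scoped Matrix

/-- The bracket `{x, a}_E = P₀ {x, a}` on `E = P₀Aⁿ` obtained from the
semi-classical limit of the deformed module structure, where
`{f, g} = C₁(f,g) − C₁(g,f)`. -/
def modBracket {k A : Type*} [CommRing k] [CommRing A] [Algebra k A]
    (D : FormalDeformation k A) {n : ℕ} (P₀ : Matrix (Fin n) (Fin n) A)
    (x : Fin n → A) (a : A) : Fin n → A :=
  P₀.mulVec fun i => D.C 1 (x i) a - D.C 1 a (x i)

section Aux

variable {k A : Type*} [CommRing k] [CommRing A] [Algebra k A]

lemma fdConv_fdC (D : FormalDeformation k A) (a b : A) (m : ℕ) :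
    fdConv (fun r x y => D.C r x y) (fdC a) (fdC b) m = D.C m a b := by
  unfold fdConv fdC
  rw [Finset.sum_eq_single (m, 0)]
  · simp
  · rintro ⟨p1, p2⟩ hp hne
    apply Finset.sum_eq_zero
    rintro ⟨q1, q2⟩ hq
    rcases Nat.eq_zero_or_pos q1 with h1 | h1
    · rcases Nat.eq_zero_or_pos q2 with h2 | h2
      · replace hp := Finset.HasAntidiagonal.mem_antidiagonal.mp hp
        replace hq := Finset.HasAntidiagonal.mem_antidiagonal.mp hq
        exact absurd (Prod.ext_iff.mpr ⟨by omega, by omega⟩) hne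
      · simp [h2.ne']
    · simp [h1.ne']
  · intro h
    simp [Finset.mem_antidiagonal] at h

lemma fdConv_right_fdC (D : FormalDeformation k A) (x : ℕ → A) (c : A) (m : ℕ) :
    fdConv (fun r x y => D.C r x y) x (fdC c) m =
      ∑ p ∈ Finset.HasAntidiagonal.antidiagonal m, D.C p.1 (x p.2) c := by
  unfold fdConv fdC
  refine Finset.sum_congr rfl fun p _ => ?_
  rw [Finset.sum_eq_single (p.2, 0)]
  · simp
  · rintro ⟨q1, q2⟩ hq hne
    rcases Nat.eq_zero_or_pos q2 with h2 | h2
    · replace hq := Finset.HasAntidiagonal.mem_antidiagonal.mp hq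
      exact absurd (Prod.ext_iff.mpr ⟨by omega, by omega⟩) hne
    · simp [h2.ne']
  · intro h
    simp [Finset.mem_antidiagonal] at h

lemma fdConv_left_fdC (D : FormalDeformation k A) (a : A) (y : ℕ → A) (m : ℕ) :
    fdConv (fun r x y => D.C r x y) (fdC a) y m =
      ∑ p ∈ Finset.HasAntidiagonal.antidiagonal m, D.C p.1 a (y p.2) := by
  unfold fdConv fdC
  refine Finset.sum_congr rfl fun p _ => ?_
  rw [Finset.sum_eq_single (0, p.2)]
  · simp
  · rintro ⟨q1, q2⟩ hq hne
    rcases Nat.eq_zero_or_pos q1 with h1 | h1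
    · replace hq := Finset.HasAntidiagonal.mem_antidiagonal.mp hq
      exact absurd (Prod.ext_iff.mpr ⟨by omega, by omega⟩) hne
    · simp [h1.ne']
  · intro h
    simp [Finset.mem_antidiagonal] at h

lemma hochschild1 (D : FormalDeformation k A) (a b c : A) :
    D.C 1 (a * b) c + D.C 1 a b * c = a * D.C 1 b c + D.C 1 a (b * c) := by
  have h := congrFun (D.assoc (fdC a) (fdC b) (fdC c)) 1
  have hab : fdConv (fun r x y => D.C r x y) (fdC a) (fdC b) = fun m => D.C m a b :=
    funext fun m => fdConv_fdC D a b m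
  have hbc : fdConv (fun r x y => D.C r x y) (fdC b) (fdC c) = fun m => D.C m b c :=
    funext fun m => fdConv_fdC D b c m
  rw [hab, hbc, fdConv_right_fdC, fdConv_left_fdC] at h
  rw [show (Finset.HasAntidiagonal.antidiagonal 1 : Finset (ℕ × ℕ)) = {(0,1),(1,0)} from by decide] at h
  rw [Finset.sum_pair (by decide), Finset.sum_pair (by decide)] at h
  simp only [D.C_zero] at h
  linear_combination h

lemma br_left (D : FormalDeformation k A) (a b c : A) :
    (D.C 1 (a * b) c - D.C 1 c (a * b)) =
      a * (D.C 1 b c - D.C 1 c b) + (D.C 1 a c - D.C 1 c a) * b := by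
  have h1 := hochschild1 D a b c
  have h2 := hochschild1 D c a b
  have h3 := hochschild1 D a c b
  have e1 : c * a = a * c := mul_comm c a
  have e2 : c * b = b * c := mul_comm c b
  rw [e1] at h2
  rw [e2] at h3
  linear_combination h1 + h2 - h3

end Aux

/-- part of Proposition 3.4. The bracket `{·,·}_E` satisfies the
Leibniz rules of a right Poisson module. -/
theorem poisson_module_leibniz {k A : Type*} [CommRing k] [CommRing A] [Algebra k A]
    (D : FormalDeformation k A)
    (n : ℕ) (P₀ : Matrix (Fin n) (Fin n) A) (hP₀ : P₀ * P₀ = P₀)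
    (x : Fin n → A) (hx : P₀.mulVec x = x) (a b c : A) :
    modBracket D P₀ (fun i => x i * c) a =
      (fun i => modBracket D P₀ x a i * c + x i * (D.C 1 c a - D.C 1 a c)) ∧
    modBracket D P₀ x (a * b) =
      (fun i => modBracket D P₀ x a i * b + modBracket D P₀ x b i * a) := by
  constructor
  · funext i
    have hx' : ∑ j, P₀ i j * x j = x i := congrFun hx i
    have key : ∀ j, D.C 1 (x j * c) a - D.C 1 a (x j * c) =
        x j * (D.C 1 c a - D.C 1 a c) + (D.C 1 (x j) a - D.C 1 a (x j)) * c := fun j => by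
      linear_combination br_left D (x j) c a
    simp only [modBracket, Matrix.mulVec, dotProduct, key, mul_add,
      Finset.sum_add_distrib, ← mul_assoc, ← Finset.sum_mul, hx']
    ring
  · funext i
    have key : ∀ j, D.C 1 (x j) (a * b) - D.C 1 (a * b) (x j) =
        (D.C 1 (x j) a - D.C 1 a (x j)) * b + (D.C 1 (x j) b - D.C 1 b (x j)) * a := fun j => by
      linear_combination -(br_left D a b (x j))
    simp only [modBracket, Matrix.mulVec, dotProduct, key, mul_add,
      Finset.sum_add_distrib, ← mul_assoc, ← Finset.sum_mul]
end

section
/- Let k be a commutative unital ring, A a commutative unital k-algebra, and qA = (A[[λ]], ⋆) a formal deformation of A with first-order term C_1; set {f, g} := C_1(f,g) − C_1(g,f). Let P_0 ∈ M_n(A) be an idempotent, E = P_0 A^n, and {x, a}_E := P_0 · ({x_1, a}, …, {x_n, a})^T. Define the curvature R_E(a,b)x := {{x, a}_E, b}_E − {{x, b}_E, a}_E − {x, {a, b}}_E for a, b ∈ A and x ∈ E. Then for each a, b ∈ A the map R_E(a,b) is a right A-linear endomorphism of E: R_E(a,b)(x · c) = (R_E(a,b) x) · c for all x ∈ E, c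 ∈ A. -/
open scoped Matrix

/-- The curvature `R_E(a,b) = [{·,a}_E, {·,b}_E] − {·,{a,b}}_E` of the bracket
`{·,·}_E`. -/
def modCurvature {k A : Type*} [CommRing k] [CommRing A] [Algebra k A]
    (D : FormalDeformation k A) {n : ℕ} (P₀ : Matrix (Fin n) (Fin n) A)
    (a b : A) (x : Fin n → A) : Fin n → A :=
  modBracket D P₀ (modBracket D P₀ x a) b - modBracket D P₀ (modBracket D P₀ x b) a
    - modBracket D P₀ x (D.C 1 a b - D.C 1 b a)

section Aux

variable {k A : Type*} [CommRing k] [CommRing A] [Algebra k A] (D : FormalDeformation k A)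

lemma mul_fdC_fdC (a b : A) : D.mul (fdC a) (fdC b) = fun m => D.C m a b := by
  funext m
  show fdConv (fun r a b => D.C r a b) (fdC a) (fdC b) m = _
  unfold fdConv fdC
  rw [Finset.sum_eq_single (m, 0)]
  · simp
  · intro p hp hne
    have hp2 : p.2 ≠ 0 := by
      intro h
      apply hne
      have h1 := Finset.HasAntidiagonal.mem_antidiagonal.mp hp
      have : p = (p.1, p.2) := rfl
      rw [this, h]
      simp; omega
    refine Finset.sum_eq_zero fun q hq => ?_
    have hq1 := Finset.HasAntidiagonal.mem_antidiagonal.mp hq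
    by_cases h0 : q.1 = 0
    · have : q.2 ≠ 0 := by omega
      simp [this]
    · simp [h0]
  · simp

lemma mul_fdC_right (x : ℕ → A) (c : A) :
    D.mul x (fdC c) = fun m => ∑ p ∈ Finset.HasAntidiagonal.antidiagonal m, D.C p.1 (x p.2) c := by
  funext m
  show fdConv (fun r a b => D.C r a b) x (fdC c) m = _
  unfold fdConv fdC
  refine Finset.sum_congr rfl fun p hp => ?_
  rw [Finset.sum_eq_single (p.2, 0)]
  · simp
  · intro q hq hne
    have hq1 := Finset.HasAntidiagonal.mem_antidiagonal.mp hq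
    have : q.2 ≠ 0 := by
      intro h
      apply hne
      have : q = (q.1, q.2) := rfl
      rw [this, h]; simp; omega
    simp [this]
  · simp

lemma mul_fdC_left (x : ℕ → A) (a : A) :
    D.mul (fdC a) x = fun m => ∑ p ∈ Finset.HasAntidiagonal.antidiagonal m, D.C p.1 a (x p.2) := by
  funext m
  show fdConv (fun r a b => D.C r a b) (fdC a) x m = _
  unfold fdConv fdC
  refine Finset.sum_congr rfl fun p hp => ?_
  rw [Finset.sum_eq_single (0, p.2)]
  · simp
  · intro q hq hne
    have hq1 := Finset.HasAntidiagonal.mem_antidiagonal.mp hq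
    have : q.1 ≠ 0 := by
      intro h
      apply hne
      have : q = (q.1, q.2) := rfl
      rw [this, h]; simp; omega
    simp [this]
  · simp

lemma assoc_coeff (a b c : A) (m : ℕ) :
    ∑ p ∈ Finset.HasAntidiagonal.antidiagonal m, D.C p.1 (D.C p.2 a b) c =
      ∑ p ∈ Finset.HasAntidiagonal.antidiagonal m, D.C p.1 a (D.C p.2 b c) := by
  have h := congrFun (D.assoc (fdC a) (fdC b) (fdC c)) m
  have h1 : fdConv (fun r a b => D.C r a b) (fdC a) (fdC b) = fun m => D.C m a b :=
    mul_fdC_fdC D a b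
  have h2 : fdConv (fun r a b => D.C r a b) (fdC b) (fdC c) = fun m => D.C m b c :=
    mul_fdC_fdC D b c
  rw [h1, h2] at h
  have h3 := congrFun (mul_fdC_right D (fun m => D.C m a b) c) m
  have h4 := congrFun (mul_fdC_left D (fun m => D.C m b c) a) m
  unfold FormalDeformation.mul at h3 h4
  rw [h3, h4] at h
  exact h

lemma cocycle (a b c : A) :
    D.C 1 a b * c + D.C 1 (a * b) c = a * D.C 1 b c + D.C 1 a (b * c) := by
  have h := assoc_coeff D a b c 1
  simp [Finset.Nat.sum_antidiagonal_eq_sum_range_succ_mk, Finset.sum_range_succ,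
    D.C_zero] at h
  exact h

lemma assoc2 (a b c : A) :
    D.C 2 a b * c + D.C 1 (D.C 1 a b) c + D.C 2 (a * b) c =
      a * D.C 2 b c + D.C 1 a (D.C 1 b c) + D.C 2 a (b * c) := by
  have h := assoc_coeff D a b c 2
  simp [Finset.Nat.sum_antidiagonal_eq_sum_range_succ_mk, Finset.sum_range_succ,
    D.C_zero] at h
  exact h

lemma leibniz (f g h : A) :
    D.C 1 (f * g) h - D.C 1 h (f * g) =
      f * (D.C 1 g h - D.C 1 h g) + (D.C 1 f h - D.C 1 h f) * g := by
  have h1 := cocycle D f g h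
  have h2 := cocycle D h f g
  rw [mul_comm h f] at h2
  have h3 := cocycle D f h g
  rw [mul_comm h g] at h3
  linear_combination h1 + h2 - h3

lemma jacobi (a b c : A) :
    (D.C 1 (D.C 1 c a - D.C 1 a c) b - D.C 1 b (D.C 1 c a - D.C 1 a c))
      - (D.C 1 (D.C 1 c b - D.C 1 b c) a - D.C 1 a (D.C 1 c b - D.C 1 b c))
      - (D.C 1 c (D.C 1 a b - D.C 1 b a) - D.C 1 (D.C 1 a b - D.C 1 b a) c) = 0 := by
  have h1 := assoc2 D c a b
  have h2 := assoc2 D a c b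
  rw [mul_comm a c, mul_comm c b] at h2
  have h3 := assoc2 D b c a
  have h4 := assoc2 D b a c
  rw [mul_comm b a, mul_comm a c] at h4
  have h5 := assoc2 D c b a
  rw [mul_comm c b, mul_comm b a] at h5
  have h6 := assoc2 D a b c
  simp only [map_sub, LinearMap.sub_apply]
  linear_combination h1 - h2 + h3 - h4 - h5 + h6

end Aux

section Aux2

variable {k A : Type*} [CommRing k] [CommRing A] [Algebra k A] (D : FormalDeformation k A)
  {n : ℕ} (P₀ : Matrix (Fin n) (Fin n) A)

lemma mulVec_mul_right (v : Fin n → A) (c : A) :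
    P₀.mulVec (fun i => v i * c) = fun i => P₀.mulVec v i * c := by
  funext i
  simp [Matrix.mulVec, dotProduct, Finset.sum_mul, mul_assoc]

lemma modBracket_add (u v : Fin n → A) (a : A) :
    modBracket D P₀ (fun i => u i + v i) a =
      fun i => modBracket D P₀ u a i + modBracket D P₀ v a i := by
  unfold modBracket
  have : (fun i => D.C 1 (u i + v i) a - D.C 1 a (u i + v i)) =
      (fun i => D.C 1 (u i) a - D.C 1 a (u i)) + fun i => D.C 1 (v i) a - D.C 1 a (v i) := by
    funext i
    simp only [map_add, LinearMap.add_apply, Pi.add_apply]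
    ring
  rw [this, Matrix.mulVec_add]
  rfl

lemma modBracket_idem (hP₀ : P₀ * P₀ = P₀) (x : Fin n → A) (a : A) :
    P₀.mulVec (modBracket D P₀ x a) = modBracket D P₀ x a := by
  unfold modBracket
  rw [Matrix.mulVec_mulVec, hP₀]

lemma modBracket_mul {y : Fin n → A} (hy : P₀.mulVec y = y) (c a : A) :
    modBracket D P₀ (fun i => y i * c) a =
      fun i => y i * (D.C 1 c a - D.C 1 a c) + modBracket D P₀ y a i * c := by
  unfold modBracket
  have h1 : (fun i => D.C 1 (y i * c) a - D.C 1 a (y i * c)) =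
      (fun i => y i * (D.C 1 c a - D.C 1 a c)) +
        fun i => (D.C 1 (y i) a - D.C 1 a (y i)) * c := by
    funext i
    have := leibniz D (y i) c a
    simp only [Pi.add_apply]
    linear_combination this
  rw [h1, Matrix.mulVec_add, mulVec_mul_right, mulVec_mul_right, hy]
  rfl

end Aux2

/-- part of Proposition 3.4. The curvature `R_E(a,b)` is a right
`A`-linear endomorphism of `E = P₀Aⁿ`. -/
theorem curvature_is_A_linear {k A : Type*} [CommRing k] [CommRing A] [Algebra k A]
    (D : FormalDeformation k A)
    (n : ℕ) (P₀ : Matrix (Fin n) (Fin n) A) (hP₀ : P₀ * P₀ = P₀)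
    (a b : A) (x : Fin n → A) (hx : P₀.mulVec x = x) (c : A) :
    modCurvature D P₀ a b (fun i => x i * c) =
      fun i => modCurvature D P₀ a b x i * c := by
  have hBa := modBracket_idem D P₀ hP₀ x a
  have hBb := modBracket_idem D P₀ hP₀ x b
  have hxa := modBracket_mul D P₀ hx c a
  have hxb := modBracket_mul D P₀ hx c b
  have hxab := modBracket_mul D P₀ hx c (D.C 1 a b - D.C 1 b a)
  -- second-level brackets
  have h2 : modBracket D P₀ (modBracket D P₀ (fun i => x i * c) a) b =
      fun i => x i * (D.C 1 (D.C 1 c a - D.C 1 a c) b - D.C 1 b (D.C 1 c a - D.C 1 a c))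
        + modBracket D P₀ x b i * (D.C 1 c a - D.C 1 a c)
        + (modBracket D P₀ x a i * (D.C 1 c b - D.C 1 b c)
            + modBracket D P₀ (modBracket D P₀ x a) b i * c) := by
    rw [hxa, modBracket_add, modBracket_mul D P₀ hx (D.C 1 c a - D.C 1 a c) b,
      modBracket_mul D P₀ hBa c b]
  have h3 : modBracket D P₀ (modBracket D P₀ (fun i => x i * c) b) a =
      fun i => x i * (D.C 1 (D.C 1 c b - D.C 1 b c) a - D.C 1 a (D.C 1 c b - D.C 1 b c))
        + modBracket D P₀ x a i * (D.C 1 c b - D.C 1 b c)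
        + (modBracket D P₀ x b i * (D.C 1 c a - D.C 1 a c)
            + modBracket D P₀ (modBracket D P₀ x b) a i * c) := by
    rw [hxb, modBracket_add, modBracket_mul D P₀ hx (D.C 1 c b - D.C 1 b c) a,
      modBracket_mul D P₀ hBb c a]
  funext i
  show (modBracket D P₀ (modBracket D P₀ (fun i => x i * c) a) b i
      - modBracket D P₀ (modBracket D P₀ (fun i => x i * c) b) a i
      - modBracket D P₀ (fun i => x i * c) (D.C 1 a b - D.C 1 b a) i) = _
  rw [h2, h3, hxab]
  show _ = (modBracket D P₀ (modBracket D P₀ x a) b i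
      - modBracket D P₀ (modBracket D P₀ x b) a i
      - modBracket D P₀ x (D.C 1 a b - D.C 1 b a) i) * c
  linear_combination x i * jacobi D a b c
end

section
/- Let C be a commutative star ring, A a unital *-algebra over C, and P_0 ∈ M_n(A) a strongly full projection with invertible τ ∈ A satisfying tr P_0 = (τ τ*)^{-1}. Identify the right A-linear endomorphism Θ_{x,y} of E = P_0 A^n (given by Θ_{x,y} z = x · h_0(y,z), with h_0(x,y) = Σ_i x_i* y_i) with the matrix x y* ∈ P_0 M_n(A) P_0 (x a column, y* the conjugate-transpose row). Then: (1) for every x ∈ E, the element Θ_{x,x} = x x* is algebraically positive in the *-algebra P_0 M_n(A) P_0, namely Θ_{x,x} = Σ_{i=1}^n T_i T_i* with T_i = x (P_0 e_i τ)* ∈ P_0 M_n(A) P_0; and (2) Θ is full: every element of P_0 M_n(A) P_0 is a finite sum of elements of the form x y* with x, y ∈ E. -/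
open scoped Matrix

/-- positivity and fullness of `Θ` in Theorem 4.1. Identifying
`Θ_{x,y}` with the matrix `x y* ∈ P₀Mₙ(A)P₀`: (1) each `Θ_{x,x}` is a sum
`∑ᵢ Tᵢ Tᵢ*` with `Tᵢ = x (P₀eᵢτ)* ∈ P₀Mₙ(A)P₀`, hence algebraically positive;
(2) every element of `P₀Mₙ(A)P₀` is a finite sum of elements `x y*` with
`x, y ∈ E = P₀Aⁿ`. -/
theorem theta_positive_and_full {C A : Type*} [CommRing C] [StarRing C]
    [Ring A] [Algebra C A] [StarRing A] [StarModule C A]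
    (n : ℕ) (P₀ : Matrix (Fin n) (Fin n) A)
    (hP₀idem : P₀ * P₀ = P₀) (hP₀herm : P₀ᴴ = P₀)
    -- P₀ is strongly full: τ is invertible and tr P₀ = (τ τ*)⁻¹
    (τ σ : A) (hτσ : τ * σ = 1) (hστ : σ * τ = 1)
    (htr : P₀.trace * (τ * star τ) = 1) (htr' : (τ * star τ) * P₀.trace = 1) :
    (∀ x : Fin n → A, P₀.mulVec x = x →
      (∀ i : Fin n, P₀ * Matrix.vecMulVec x (fun b => star (P₀ b i * τ)) * P₀ =
        Matrix.vecMulVec x (fun b => star (P₀ b i * τ))) ∧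
      Matrix.vecMulVec x (fun j => star (x j)) =
        ∑ i : Fin n, Matrix.vecMulVec x (fun b => star (P₀ b i * τ)) *
          (Matrix.vecMulVec x (fun b => star (P₀ b i * τ)))ᴴ) ∧
    (∀ L : Matrix (Fin n) (Fin n) A, P₀ * L * P₀ = L →
      L ∈ AddSubmonoid.closure {M : Matrix (Fin n) (Fin n) A |
        ∃ x y : Fin n → A, P₀.mulVec x = x ∧ P₀.mulVec y = y ∧
          M = Matrix.vecMulVec x fun j => star (y j)}) := by
  classical
  -- basic entrywise facts
  have hstar : ∀ a b : Fin n, star (P₀ a b) = P₀ b a := by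
    intro a b
    have := congrFun (congrFun hP₀herm b) a
    simpa [Matrix.conjTranspose_apply] using this
  have hsq : ∀ a b : Fin n, ∑ c, P₀ a c * P₀ c b = P₀ a b := by
    intro a b
    have := congrFun (congrFun hP₀idem a) b
    simpa [Matrix.mul_apply] using this
  have hkey : star τ * P₀.trace * τ = 1 := by
    have h1 : star τ * star σ = 1 := by rw [← star_mul, hστ, star_one]
    calc star τ * P₀.trace * τ
        = star τ * P₀.trace * τ * (star τ * star σ) := by rw [h1, mul_one]
      _ = star τ * (P₀.trace * (τ * star τ)) * star σ := by
          simp only [mul_assoc]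
      _ = 1 := by rw [htr, mul_one, h1]
  have hsum : ∑ i : Fin n, ∑ b : Fin n,
      star (P₀ b i * τ) * (P₀ b i * τ) = 1 := by
    have h2 : ∀ i b : Fin n, star (P₀ b i * τ) * (P₀ b i * τ)
        = star τ * (P₀ i b * P₀ b i) * τ := by
      intro i b
      rw [star_mul, hstar]
      simp only [mul_assoc]
    simp_rw [h2, ← Finset.sum_mul, ← Finset.mul_sum, hsq]
    exact hkey
  constructor
  · intro x hx
    have hx' : ∀ b : Fin n, ∑ j, P₀ b j * x j = x b := by
      intro b
      have := congrFun hx b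
      simpa [Matrix.mulVec, dotProduct] using this
    constructor
    · intro i
      ext a b
      simp only [Matrix.mul_apply, Matrix.vecMulVec_apply]
      calc ∑ c, (∑ d, P₀ a d * (x d * star (P₀ c i * τ))) * P₀ c b
          = ∑ c, (x a * star (P₀ c i * τ)) * P₀ c b := by
            refine Finset.sum_congr rfl fun c _ => ?_
            congr 1
            calc ∑ d, P₀ a d * (x d * star (P₀ c i * τ))
                = (∑ d, P₀ a d * x d) * star (P₀ c i * τ) := by
                  rw [Finset.sum_mul]; simp_rw [mul_assoc]
              _ = x a * star (P₀ c i * τ) := by rw [hx']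
        _ = x a * star (P₀ b i * τ) := by
            simp_rw [star_mul, hstar, mul_assoc, ← Finset.mul_sum]
            rw [hsq]
    · ext a d
      simp only [Matrix.sum_apply, Matrix.mul_apply, Matrix.vecMulVec_apply,
        Matrix.conjTranspose_apply, star_mul, star_star]
      calc x a * star (x d)
          = x a * (∑ i : Fin n, ∑ b : Fin n,
              star (P₀ b i * τ) * (P₀ b i * τ)) * star (x d) := by
            rw [hsum, mul_one]
        _ = ∑ i : Fin n, ∑ b : Fin n,
              x a * star (P₀ b i * τ) * ((P₀ b i * τ) * star (x d)) := by
            rw [Finset.mul_sum, Finset.sum_mul]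
            refine Finset.sum_congr rfl fun i _ => ?_
            rw [Finset.mul_sum, Finset.sum_mul]
            refine Finset.sum_congr rfl fun b _ => ?_
            simp only [mul_assoc]
        _ = _ := by
            refine Finset.sum_congr rfl fun i _ => ?_
            refine Finset.sum_congr rfl fun b _ => ?_
            simp only [star_mul, hstar, star_star, mul_assoc]
  · intro L hL
    have hrepr : L = ∑ i : Fin n, ∑ j : Fin n,
        Matrix.vecMulVec (fun b => P₀ b i * L i j) (fun d => star (P₀ d j)) := by
      ext a d
      simp only [Matrix.sum_apply, Matrix.vecMulVec_apply]
      have hLa := congrFun (congrFun hL a) d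
      simp only [Matrix.mul_apply] at hLa
      calc L a d = ∑ j, (∑ i, P₀ a i * L i j) * P₀ j d := hLa.symm
        _ = ∑ j, ∑ i, P₀ a i * L i j * P₀ j d := by
            refine Finset.sum_congr rfl fun j _ => ?_
            rw [Finset.sum_mul]
        _ = ∑ i, ∑ j, P₀ a i * L i j * star (P₀ d j) := by
            rw [Finset.sum_comm]
            simp_rw [hstar]
    rw [hrepr]
    refine AddSubmonoid.sum_mem _ fun i _ => AddSubmonoid.sum_mem _ fun j _ => ?_
    refine AddSubmonoid.subset_closure ?_
    refine ⟨fun b => P₀ b i * L i j, fun b => P₀ b j, ?_, ?_, rfl⟩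
    · ext b
      simp only [Matrix.mulVec, dotProduct]
      calc ∑ c, P₀ b c * (P₀ c i * L i j)
          = (∑ c, P₀ b c * P₀ c i) * L i j := by
            rw [Finset.sum_mul]; simp_rw [mul_assoc]
        _ = P₀ b i * L i j := by rw [hsq]
    · ext b
      simp only [Matrix.mulVec, dotProduct]
      exact hsq b j
end

section
/- Let C be a commutative star ring in which 2 is invertible, A a unital *-algebra over C, and qA = (A[[λ]], ⋆) a Hermitian formal deformation of A. Let P_0 ∈ M_n(A) be a strongly full projection, i.e. there is an invertible τ ∈ A with tr P_0 = (τ τ*)^{-1}. Then every projection P ∈ M_n(A)[[λ]] with P ⋆ P = P, P* = P deforming P_0 is again strongly full: there exists τ' ∈ A[[λ]] which is ⋆-invertible such that (tr P) ⋆ (τ' ⋆ τ'^*) = 1 = (τ' ⋆ τ'^*) ⋆ (tr P), where tr P is the sum of the diagonal entries of P. -/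
open scoped Matrix

section Aux

open Finset

namespace FormalDeformation

variable {k A : Type*} [CommRing k] [Ring A] [Algebra k A]

lemma mul_def (D : FormalDeformation k A) (x y : ℕ → A) (n : ℕ) :
    D.mul x y n =
      ∑ p ∈ antidiagonal n, ∑ q ∈ antidiagonal p.2, D.C p.1 (x q.1) (y q.2) := rfl

lemma mul_coeff_zero (D : FormalDeformation k A) (x y : ℕ → A) :
    D.mul x y 0 = x 0 * y 0 := by
  rw [mul_def]
  simp [Finset.Nat.antidiagonal_zero, D.C_zero]

lemma massoc (D : FormalDeformation k A) (x y z : ℕ → A) :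
    D.mul (D.mul x y) z = D.mul x (D.mul y z) := D.assoc x y z

lemma mone_mul (D : FormalDeformation k A) (x : ℕ → A) :
    D.mul (fdOne A) x = x := D.one_mul x

lemma mmul_one (D : FormalDeformation k A) (x : ℕ → A) :
    D.mul x (fdOne A) = x := D.mul_one x

/-- extract the coefficient with `q.2 = n` from the double antidiagonal sum -/
lemma key_right (F : ℕ → ℕ → ℕ → A) (n : ℕ) :
    ∑ p ∈ antidiagonal n, ∑ q ∈ antidiagonal p.2,
      (if q.2 = n then F p.1 q.1 q.2 else 0) = F 0 0 n := by
  rw [Finset.sum_eq_single ((0 : ℕ), n)]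
  · rw [Finset.sum_eq_single ((0 : ℕ), n)]
    · simp
    · rintro ⟨a, b⟩ hq hne
      rw [Finset.HasAntidiagonal.mem_antidiagonal] at hq
      rw [if_neg]
      intro hb
      exact hne (by simp at hb ⊢; omega)
    · intro h; exact absurd (by simp [Finset.HasAntidiagonal.mem_antidiagonal]) h
  · rintro ⟨a, b⟩ hp hne
    rw [Finset.HasAntidiagonal.mem_antidiagonal] at hp
    apply Finset.sum_eq_zero
    rintro ⟨c, d⟩ hq
    rw [Finset.HasAntidiagonal.mem_antidiagonal] at hq
    rw [if_neg]
    intro hd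
    simp only at hd hq
    exact hne (by simp; omega)
  · intro h; exact absurd (by simp [Finset.HasAntidiagonal.mem_antidiagonal]) h

lemma key_left (F : ℕ → ℕ → ℕ → A) (n : ℕ) :
    ∑ p ∈ antidiagonal n, ∑ q ∈ antidiagonal p.2,
      (if q.1 = n then F p.1 q.1 q.2 else 0) = F 0 n 0 := by
  rw [Finset.sum_eq_single ((0 : ℕ), n)]
  · rw [Finset.sum_eq_single ((n : ℕ), 0)]
    · simp
    · rintro ⟨a, b⟩ hq hne
      rw [Finset.HasAntidiagonal.mem_antidiagonal] at hq
      rw [if_neg]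
      intro hb
      exact hne (by simp at hb ⊢; omega)
    · intro h; exact absurd (by simp [Finset.HasAntidiagonal.mem_antidiagonal]) h
  · rintro ⟨a, b⟩ hp hne
    rw [Finset.HasAntidiagonal.mem_antidiagonal] at hp
    apply Finset.sum_eq_zero
    rintro ⟨c, d⟩ hq
    rw [Finset.HasAntidiagonal.mem_antidiagonal] at hq
    rw [if_neg]
    intro hd
    simp only at hd hq
    exact hne (by simp; omega)
  · intro h; exact absurd (by simp [Finset.HasAntidiagonal.mem_antidiagonal]) h

/-- the remainder after extracting the top-right coefficient -/
def Rrem (D : FormalDeformation k A) (x y : ℕ → A) (n : ℕ) : A :=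
  ∑ p ∈ antidiagonal n, ∑ q ∈ antidiagonal p.2,
    if q.2 = n then 0 else D.C p.1 (x q.1) (y q.2)

def Lrem (D : FormalDeformation k A) (x y : ℕ → A) (n : ℕ) : A :=
  ∑ p ∈ antidiagonal n, ∑ q ∈ antidiagonal p.2,
    if q.1 = n then 0 else D.C p.1 (x q.1) (y q.2)

def Qrem (D : FormalDeformation k A) (x y : ℕ → A) (n : ℕ) : A :=
  ∑ p ∈ antidiagonal n, ∑ q ∈ antidiagonal p.2,
    if q.1 = n ∨ q.2 = n then 0 else D.C p.1 (x q.1) (y q.2)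

private lemma split_ite (a : A) (P : Prop) [Decidable P] :
    a = (if P then a else 0) + (if P then 0 else a) := by
  split <;> simp

lemma mul_eq_R (D : FormalDeformation k A) (x y : ℕ → A) (n : ℕ) :
    D.mul x y n = x 0 * y n + D.Rrem x y n := by
  rw [mul_def, ← D.C_zero (x 0) (y n), ← key_right (fun r i j => D.C r (x i) (y j)) n,
    Rrem, ← Finset.sum_add_distrib]
  apply Finset.sum_congr rfl
  intro p _
  rw [← Finset.sum_add_distrib]
  apply Finset.sum_congr rfl
  intro q _
  exact split_ite _ _

lemma mul_eq_L (D : FormalDeformation k A) (x y : ℕ → A) (n : ℕ) :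
    D.mul x y n = x n * y 0 + D.Lrem x y n := by
  rw [mul_def, ← D.C_zero (x n) (y 0), ← key_left (fun r i j => D.C r (x i) (y j)) n,
    Lrem, ← Finset.sum_add_distrib]
  apply Finset.sum_congr rfl
  intro p _
  rw [← Finset.sum_add_distrib]
  apply Finset.sum_congr rfl
  intro q _
  exact split_ite _ _

lemma mul_eq_Q (D : FormalDeformation k A) (x y : ℕ → A) (n : ℕ) (hn : n ≠ 0) :
    D.mul x y n = x 0 * y n + x n * y 0 + D.Qrem x y n := by
  rw [mul_def, ← D.C_zero (x 0) (y n), ← D.C_zero (x n) (y 0),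
    ← key_right (fun r i j => D.C r (x i) (y j)) n,
    ← key_left (fun r i j => D.C r (x i) (y j)) n,
    Qrem, ← Finset.sum_add_distrib, ← Finset.sum_add_distrib]
  apply Finset.sum_congr rfl
  rintro ⟨a, b⟩ hp
  rw [Finset.HasAntidiagonal.mem_antidiagonal] at hp
  rw [← Finset.sum_add_distrib, ← Finset.sum_add_distrib]
  apply Finset.sum_congr rfl
  rintro ⟨c, d⟩ hq
  rw [Finset.HasAntidiagonal.mem_antidiagonal] at hq
  simp only
  by_cases h2 : d = n
  · have hc : c ≠ n := by omega
    simp [h2, hc]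
  · by_cases h1 : c = n
    · simp [h1, h2]
    · simp [h1, h2]

lemma Rrem_congr (D : FormalDeformation k A) (x y y' : ℕ → A) (n : ℕ)
    (h : ∀ m, m < n → y m = y' m) : D.Rrem x y n = D.Rrem x y' n := by
  unfold Rrem
  apply Finset.sum_congr rfl
  rintro ⟨a, b⟩ hp
  rw [Finset.HasAntidiagonal.mem_antidiagonal] at hp
  apply Finset.sum_congr rfl
  rintro ⟨c, d⟩ hq
  rw [Finset.HasAntidiagonal.mem_antidiagonal] at hq
  simp only
  by_cases hd : d = n
  · simp [hd]
  · rw [if_neg hd, if_neg hd, h d (by omega)]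

lemma Lrem_congr (D : FormalDeformation k A) (x x' y : ℕ → A) (n : ℕ)
    (h : ∀ m, m < n → x m = x' m) : D.Lrem x y n = D.Lrem x' y n := by
  unfold Lrem
  apply Finset.sum_congr rfl
  rintro ⟨a, b⟩ hp
  rw [Finset.HasAntidiagonal.mem_antidiagonal] at hp
  apply Finset.sum_congr rfl
  rintro ⟨c, d⟩ hq
  rw [Finset.HasAntidiagonal.mem_antidiagonal] at hq
  simp only
  by_cases hc : c = n
  · simp [hc]
  · rw [if_neg hc, if_neg hc, h c (by omega)]

lemma Qrem_congr (D : FormalDeformation k A) (x x' y y' : ℕ → A) (n : ℕ)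
    (hx : ∀ m, m < n → x m = x' m) (hy : ∀ m, m < n → y m = y' m) :
    D.Qrem x y n = D.Qrem x' y' n := by
  unfold Qrem
  apply Finset.sum_congr rfl
  rintro ⟨a, b⟩ hp
  rw [Finset.HasAntidiagonal.mem_antidiagonal] at hp
  apply Finset.sum_congr rfl
  rintro ⟨c, d⟩ hq
  rw [Finset.HasAntidiagonal.mem_antidiagonal] at hq
  simp only
  by_cases h : c = n ∨ d = n
  · simp [h]
  · push_neg at h
    rw [if_neg (by tauto), if_neg (by tauto), hx c (by omega), hy d (by omega)]

end FormalDeformation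

end Aux
section Aux2

open Finset

namespace FormalDeformation

variable {k A : Type*} [CommRing k] [Ring A] [Algebra k A]

/-- order-by-order right inverse -/
def rinv (D : FormalDeformation k A) (v : A) (x : ℕ → A) : ℕ → A
  | 0 => v
  | n + 1 =>
    -(v * D.Rrem x (fun m => if h : m < n + 1 then D.rinv v x m else 0) (n + 1))
  termination_by n => n
  decreasing_by exact h

/-- order-by-order left inverse -/
def linv (D : FormalDeformation k A) (v : A) (x : ℕ → A) : ℕ → A
  | 0 => v
  | n + 1 =>
    -(D.Lrem (fun m => if h : m < n + 1 then D.linv v x m else 0) x (n + 1) * v)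
  termination_by n => n
  decreasing_by exact h

lemma rinv_spec (D : FormalDeformation k A) (v : A) (x : ℕ → A) (hv : x 0 * v = 1) :
    D.mul x (D.rinv v x) = fdOne A := by
  funext n
  cases n with
  | zero => rw [mul_coeff_zero, rinv, hv]; rfl
  | succ n =>
    rw [mul_eq_R]
    have hR : D.Rrem x (fun m => if h : m < n + 1 then D.rinv v x m else 0) (n + 1) =
        D.Rrem x (D.rinv v x) (n + 1) := by
      apply Rrem_congr
      intro m hm
      rw [dif_pos hm]
    have hdef : D.rinv v x (n + 1) = -(v * D.Rrem x (D.rinv v x) (n + 1)) := by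
      rw [rinv, hR]
    rw [hdef, mul_neg, ← mul_assoc, hv, _root_.one_mul, neg_add_cancel]
    simp [fdOne]

lemma linv_spec (D : FormalDeformation k A) (v : A) (x : ℕ → A) (hv : v * x 0 = 1) :
    D.mul (D.linv v x) x = fdOne A := by
  funext n
  cases n with
  | zero => rw [mul_coeff_zero, linv, hv]; rfl
  | succ n =>
    rw [mul_eq_L]
    have hL : D.Lrem (fun m => if h : m < n + 1 then D.linv v x m else 0) x (n + 1) =
        D.Lrem (D.linv v x) x (n + 1) := by
      apply Lrem_congr
      intro m hm
      rw [dif_pos hm]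
    have hdef : D.linv v x (n + 1) = -(D.Lrem (D.linv v x) x (n + 1) * v) := by
      rw [linv, hL]
    rw [hdef, neg_mul, mul_assoc, hv, _root_.mul_one, neg_add_cancel]
    simp [fdOne]

lemma left_eq_right (D : FormalDeformation k A) (x y z : ℕ → A)
    (hy : D.mul x y = fdOne A) (hz : D.mul z x = fdOne A) : z = y := by
  have h1 : D.mul (D.mul z x) y = D.mul z (D.mul x y) := D.massoc z x y
  rw [hy, hz, D.mone_mul, D.mmul_one] at h1
  exact h1.symm

lemma exists_inv (D : FormalDeformation k A) (x : ℕ → A) (v : A)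
    (h1 : x 0 * v = 1) (h2 : v * x 0 = 1) :
    ∃ y, D.mul x y = fdOne A ∧ D.mul y x = fdOne A ∧ y 0 = v := by
  refine ⟨D.rinv v x, D.rinv_spec v x h1, ?_, by rw [rinv]⟩
  have := D.left_eq_right x (D.rinv v x) (D.linv v x) (D.rinv_spec v x h1)
    (D.linv_spec v x h2)
  rw [← this]
  exact D.linv_spec v x h2

/-- order-by-order hermitian square root of `h` (with `h 0 = 1`) -/
def sqrtS (D : FormalDeformation k A) [Invertible (2 : k)] (h : ℕ → A) : ℕ → A
  | 0 => 1
  | n + 1 =>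
    ⅟(2 : k) • (h (n + 1) -
      D.Qrem (fun m => if hm : m < n + 1 then D.sqrtS h m else 0)
        (fun m => if hm : m < n + 1 then D.sqrtS h m else 0) (n + 1))
  termination_by n => n
  decreasing_by all_goals exact hm

lemma sqrtS_spec (D : FormalDeformation k A) [Invertible (2 : k)] (h : ℕ → A)
    (h0 : h 0 = 1) : D.mul (D.sqrtS h) (D.sqrtS h) = h := by
  funext n
  cases n with
  | zero =>
    have hs0 : D.sqrtS h 0 = 1 := by rw [sqrtS]
    rw [mul_coeff_zero, hs0, _root_.one_mul, h0]
  | succ n =>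
    rw [D.mul_eq_Q _ _ _ (Nat.succ_ne_zero n)]
    have hQ : D.Qrem (fun m => if hm : m < n + 1 then D.sqrtS h m else 0)
        (fun m => if hm : m < n + 1 then D.sqrtS h m else 0) (n + 1) =
        D.Qrem (D.sqrtS h) (D.sqrtS h) (n + 1) := by
      apply Qrem_congr <;> intro m hm <;> rw [dif_pos hm]
    have hdef : D.sqrtS h (n + 1) =
        ⅟(2 : k) • (h (n + 1) - D.Qrem (D.sqrtS h) (D.sqrtS h) (n + 1)) := by
      rw [sqrtS, hQ]
    have hs0 : D.sqrtS h 0 = 1 := by rw [sqrtS]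
    rw [hs0, hdef, _root_.one_mul, _root_.mul_one, ← two_smul k, smul_smul,
      mul_invOf_self, one_smul]
    show h (n + 1) - _ + _ = _
    abel

end FormalDeformation

end Aux2
section Aux3

open Finset

lemma fdStar_fdStar {A : Type*} [Ring A] [StarRing A] (x : ℕ → A) :
    fdStar (fdStar x) = x := by
  funext n; simp [fdStar]

lemma fdStar_fdOne {A : Type*} [Ring A] [StarRing A] :
    fdStar (fdOne A) = fdOne A := by
  funext n
  simp only [fdStar, fdOne]
  split <;> simp

lemma fdStar_fdC {A : Type*} [Ring A] [StarRing A] (a : A) :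
    fdStar (fdC a) = fdC (star a) := by
  funext n
  simp only [fdStar, fdC]
  split <;> simp

lemma fdC_zero_coeff {A : Type*} [Ring A] (a : A) : fdC a 0 = a := rfl

namespace FormalDeformation

variable {k A : Type*} [CommRing k] [Ring A] [Algebra k A]

lemma mul_fdC (D : FormalDeformation k A) (a b : A) (n : ℕ) :
    D.mul (fdC a) (fdC b) n = D.C n a b := by
  rw [mul_def]
  rw [Finset.sum_eq_single ((n : ℕ), 0)]
  · rw [Finset.Nat.antidiagonal_zero, Finset.sum_singleton]
    simp [fdC]
  · rintro ⟨c, d⟩ hp hne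
    rw [Finset.HasAntidiagonal.mem_antidiagonal] at hp
    apply Finset.sum_eq_zero
    rintro ⟨e, f⟩ hq
    rw [Finset.HasAntidiagonal.mem_antidiagonal] at hq
    simp only
    have hd : d ≠ 0 := by
      intro h; exact hne (by simp; omega)
    by_cases he : e = 0
    · have hf : f ≠ 0 := by omega
      simp [fdC, hf]
    · simp [fdC, he]
  · intro h; exact absurd (by simp [Finset.HasAntidiagonal.mem_antidiagonal]) h

variable [StarRing A]

lemma cochain_star (D : FormalDeformation k A) (hD : D.IsHermitian)
    (r : ℕ) (a b : A) : star (D.C r a b) = D.C r (star b) (star a) := by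
  have h := congrFun (hD (fdC a) (fdC b)) r
  simp only [fdStar] at h
  rw [mul_fdC] at h
  rw [h, fdStar_fdC, fdStar_fdC, mul_fdC]

variable [StarRing k] [StarModule k A]

lemma Qrem_star (D : FormalDeformation k A) (hD : D.IsHermitian)
    (x : ℕ → A) (hx : ∀ m, star (x m) = x m) (n : ℕ) :
    star (D.Qrem x x n) = D.Qrem x x n := by
  unfold Qrem
  rw [star_sum]
  apply Finset.sum_congr rfl
  rintro ⟨a, b⟩ hp
  rw [star_sum]
  have lhs_eq : ∀ q : ℕ × ℕ,
      star (if q.1 = n ∨ q.2 = n then 0 else D.C (a, b).1 (x q.1) (x q.2)) =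
      (if q.2 = n ∨ q.1 = n then 0 else D.C (a, b).1 (x q.2) (x q.1)) := by
    intro q
    by_cases h : q.1 = n ∨ q.2 = n
    · rw [if_pos h, if_pos (Or.symm h), star_zero]
    · rw [if_neg h, if_neg fun hh => h (Or.symm hh), D.cochain_star hD, hx, hx]
  rw [Finset.sum_congr rfl fun q _ => lhs_eq q]
  conv_rhs => rw [← Finset.HasAntidiagonal.map_swap_antidiagonal (n := b)]
  rw [Finset.sum_map]
  apply Finset.sum_congr rfl
  rintro ⟨c, d⟩ hq
  simp only [Function.Embedding.coeFn_mk, Prod.swap_prod_mk]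

lemma star_invOf_two [Invertible (2 : k)] : star (⅟(2 : k)) = ⅟(2 : k) := by
  have h : (2 : k) * star (⅟(2 : k)) = 1 := by
    have h1 := congrArg star (invOf_mul_self (2 : k))
    rwa [star_mul, star_ofNat, star_one] at h1
  calc star (⅟(2 : k)) = ⅟(2 : k) * 2 * star (⅟(2 : k)) := by
        rw [invOf_mul_self, _root_.one_mul]
    _ = ⅟(2 : k) * (2 * star (⅟(2 : k))) := by rw [mul_assoc]
    _ = ⅟(2 : k) := by rw [h, _root_.mul_one]

lemma sqrtS_star (D : FormalDeformation k A) [Invertible (2 : k)]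
    (hD : D.IsHermitian) (h : ℕ → A) (hh : ∀ m, star (h m) = h m) :
    ∀ m, star (D.sqrtS h m) = D.sqrtS h m := by
  intro m
  induction m using Nat.strong_induction_on with
  | _ m ih =>
    match m with
    | 0 => rw [sqrtS]; exact star_one A
    | n + 1 =>
      rw [sqrtS, star_smul, star_sub, hh, star_invOf_two]
      congr 1
      congr 1
      apply D.Qrem_star hD
      intro m
      by_cases hm : m < n + 1
      · rw [dif_pos hm]; exact ih m hm
      · rw [dif_neg hm]; exact star_zero A

end FormalDeformation

end Aux3
/-- Proposition 4.4. Every projection `P` of `Mₙ(qA)` deforming a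
strongly full projection `P₀ ∈ Mₙ(A)` is again strongly full: there is a ⋆-invertible
`τ' ∈ A[[λ]]` with `(tr P) ⋆ (τ' ⋆ τ'^*) = 1 = (τ' ⋆ τ'^*) ⋆ (tr P)`. -/
theorem deformed_projection_strongly_full {C A : Type*} [CommRing C] [StarRing C]
    [Invertible (2 : C)] [Ring A] [Algebra C A] [StarRing A] [StarModule C A]
    (D : FormalDeformation C A) (hD : D.IsHermitian) (n : ℕ)
    (P₀ : Matrix (Fin n) (Fin n) A)
    (hP₀idem : P₀ * P₀ = P₀) (hP₀herm : P₀ᴴ = P₀)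
    -- P₀ is strongly full: τ is invertible and tr P₀ = (τ τ*)⁻¹
    (τ σ : A) (hτσ : τ * σ = 1) (hστ : σ * τ = 1)
    (htr : P₀.trace * (τ * star τ) = 1) (htr' : (τ * star τ) * P₀.trace = 1)
    -- P is a projection of Mₙ(qA) deforming P₀
    (P : ℕ → Matrix (Fin n) (Fin n) A)
    (hPidem : D.matMul n P P = P) (hPherm : ∀ m, (P m)ᴴ = P m) (hP0 : P 0 = P₀) :
    ∃ τ' σ' : ℕ → A,
      D.mul τ' σ' = fdOne A ∧ D.mul σ' τ' = fdOne A ∧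
      D.mul (fun m => (P m).trace) (D.mul τ' (fdStar τ')) = fdOne A ∧
      D.mul (D.mul τ' (fdStar τ')) (fun m => (P m).trace) = fdOne A := by
  classical
  set t : ℕ → A := fun m => (P m).trace with ht_def
  have ht_star : fdStar t = t := by
    funext m
    simp only [fdStar, ht_def]
    rw [← Matrix.trace_conjTranspose, hPherm]
  have ht0 : t 0 = P₀.trace := by simp [ht_def, hP0]
  obtain ⟨u, hu1, hu2, hu0⟩ := D.exists_inv t (τ * star τ)
    (by rw [ht0]; exact htr) (by rw [ht0]; exact htr')
  have hu_star : fdStar u = u := by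
    have h1 := congrArg fdStar hu1
    rw [hD, ht_star, fdStar_fdOne] at h1
    exact D.left_eq_right t u (fdStar u) hu1 h1
  obtain ⟨T', hT1, hT2, hT'0⟩ := D.exists_inv (fdC τ) σ
    (by rw [fdC_zero_coeff]; exact hτσ) (by rw [fdC_zero_coeff]; exact hστ)
  set hser : ℕ → A := D.mul T' (D.mul u (fdStar T')) with hser_def
  have hh0 : hser 0 = 1 := by
    rw [hser_def, FormalDeformation.mul_coeff_zero, FormalDeformation.mul_coeff_zero,
      hT'0, hu0]
    show σ * ((τ * star τ) * star (T' 0)) = 1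
    rw [hT'0, mul_assoc τ, ← star_mul, hστ, star_one, _root_.mul_one, hστ]
  have hh_star : ∀ m, star (hser m) = hser m := by
    have hfs : fdStar hser = hser := by
      rw [hser_def, hD, hD, fdStar_fdStar, hu_star, D.massoc]
    intro m; exact congrFun hfs m
  set s : ℕ → A := D.sqrtS hser with hs_def
  have hs_mul : D.mul s s = hser := D.sqrtS_spec hser hh0
  have hs0 : s 0 = 1 := by rw [hs_def, FormalDeformation.sqrtS]
  have hs_star : fdStar s = s := funext fun m => D.sqrtS_star hD hser hh_star m
  obtain ⟨s', hs1, hs2, _⟩ := D.exists_inv s 1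
    (by rw [hs0, _root_.mul_one]) (by rw [hs0, _root_.one_mul])
  refine ⟨D.mul (fdC τ) s, D.mul s' T', ?_, ?_, ?_, ?_⟩
  · rw [D.massoc, ← D.massoc s s' T', hs1, D.mone_mul, hT1]
  · rw [D.massoc, ← D.massoc T' (fdC τ) s, hT2, D.mone_mul, hs2]
  all_goals {
    have hw : D.mul (D.mul (fdC τ) s) (fdStar (D.mul (fdC τ) s)) = u := by
      rw [hD, hs_star, D.massoc, ← D.massoc s s (fdStar (fdC τ)), hs_mul, hser_def,
        D.massoc T' (D.mul u (fdStar T')) (fdStar (fdC τ)),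
        D.massoc u (fdStar T') (fdStar (fdC τ))]
      have hTT : D.mul (fdStar T') (fdStar (fdC τ)) = fdOne A := by
        rw [← hD, hT1, fdStar_fdOne]
      rw [hTT, D.mmul_one, ← D.massoc, hT1, D.mone_mul]
    rw [hw]
    first
      | exact hu1
      | exact hu2
  }
end

section
/- Let C be a commutative star ring, A a unital *-algebra over C, qA = (A[[λ]], ⋆) a Hermitian formal deformation of A, P_0 ∈ M_n(A) a projection, and P ∈ M_n(A)[[λ]] a projection (P ⋆ P = P, P* = P) deforming P_0. Let qE = P ⋆ A^n[[λ]] = { P ⋆ x : x ∈ A^n[[λ]] } be the right qA-module with action x ⋆ a (entrywise ⋆), and let h(x, y) = Σ_{i=1}^n x_i* ⋆ y_i be its canonical qA-valued inner product. Then every C[[λ]]-additive map h' : qE × qE → A[[λ]] satisfying h'(x, y)* = h'(y, x) and h'(x, y ⋆ a) = h'(x, y) ⋆ a for all x, y ∈ qE, a ∈ A[[λ]], is of the form h'(x, y) = h(x, H y) for some right qA-linear endomorphism H of qE which is Hermitian with respect to h, i.e. h(H x, y) = h(x, H y) for all x, y ∈ qE. -/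
open scoped Matrix

/-- The canonical `qA`-valued inner product `h(x, y) = ∑ᵢ xᵢ* ⋆ yᵢ` on series of
column vectors in `A^n[[λ]]`. -/
def canonicalInner {C A : Type*} [CommRing C] [Ring A] [Algebra C A] [StarRing A]
    (D : FormalDeformation C A) (n : ℕ) (x y : ℕ → Fin n → A) : ℕ → A :=
  ∑ i : Fin n, D.mul (fdStar fun m => x m i) fun m => y m i
section AuxLemmas

theorem fd_sum_swap3 {β : Type*} [AddCommMonoid β] {ι : Type*} (s : Finset ι) (m : ℕ)
    (f : ℕ × ℕ → ℕ × ℕ → ι → β) :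
    ∑ p ∈ Finset.HasAntidiagonal.antidiagonal m, ∑ q ∈ Finset.HasAntidiagonal.antidiagonal p.2, ∑ j ∈ s, f p q j =
      ∑ j ∈ s, ∑ p ∈ Finset.HasAntidiagonal.antidiagonal m, ∑ q ∈ Finset.HasAntidiagonal.antidiagonal p.2, f p q j :=
  (Finset.sum_congr rfl fun _ _ => Finset.sum_comm).trans Finset.sum_comm

variable {k A : Type*} [CommRing k] [Ring A] [Algebra k A] (D : FormalDeformation k A)

theorem fd_mul_add (x y z : ℕ → A) : D.mul x (y + z) = D.mul x y + D.mul x z := by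
  funext m
  simp [FormalDeformation.mul, fdConv, Finset.sum_add_distrib]

theorem fd_add_mul (x y z : ℕ → A) : D.mul (x + y) z = D.mul x z + D.mul y z := by
  funext m
  simp [FormalDeformation.mul, fdConv, Finset.sum_add_distrib]

theorem fd_mul_zero (x : ℕ → A) : D.mul x 0 = 0 := by
  funext m
  simp [FormalDeformation.mul, fdConv]

theorem fd_zero_mul (x : ℕ → A) : D.mul 0 x = 0 := by
  funext m
  simp [FormalDeformation.mul, fdConv]

theorem fd_mul_sum {ι : Type*} (s : Finset ι) (x : ℕ → A) (f : ι → ℕ → A) :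
    D.mul x (∑ j ∈ s, f j) = ∑ j ∈ s, D.mul x (f j) := by
  induction s using Finset.cons_induction with
  | empty => simpa using fd_mul_zero D x
  | cons a s ha ih => rw [Finset.sum_cons, Finset.sum_cons, fd_mul_add, ih]

theorem fd_sum_mul {ι : Type*} (s : Finset ι) (x : ℕ → A) (f : ι → ℕ → A) :
    D.mul (∑ j ∈ s, f j) x = ∑ j ∈ s, D.mul (f j) x := by
  induction s using Finset.cons_induction with
  | empty => simpa using fd_zero_mul D x
  | cons a s ha ih => rw [Finset.sum_cons, Finset.sum_cons, fd_add_mul, ih]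

theorem fdStar_sum {B : Type*} [AddCommMonoid B] [StarAddMonoid B] {ι : Type*}
    (s : Finset ι) (f : ι → ℕ → B) :
    fdStar (∑ j ∈ s, f j) = ∑ j ∈ s, fdStar (f j) := by
  funext m
  simp [fdStar, Finset.sum_apply]

theorem fd_ext_col {B : Type*} {n : ℕ} {v w : ℕ → Fin n → B}
    (h : ∀ i, (fun m => v m i) = fun m => w m i) : v = w :=
  funext fun m => funext fun i => congrFun (h i) m

theorem fd_col_sum {B : Type*} [AddCommMonoid B] {n : ℕ} {ι : Type*} (s : Finset ι)
    (f : ι → ℕ → Fin n → B) (i : Fin n) :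
    (fun m => (∑ j ∈ s, f j) m i) = ∑ j ∈ s, fun m => f j m i := by
  funext m
  simp [Finset.sum_apply]

theorem fd_mvMul_col {n : ℕ} (P : ℕ → Matrix (Fin n) (Fin n) A) (v : ℕ → Fin n → A)
    (i : Fin n) :
    (fun m => D.mvMul n P v m i) = ∑ j, D.mul (fun m => P m i j) fun m => v m j := by
  funext m
  simp only [FormalDeformation.mvMul, FormalDeformation.mul, fdConv, Finset.sum_apply]
  exact fd_sum_swap3 Finset.univ m fun p q j => D.C p.1 (P q.1 i j) (v q.2 j)

theorem fd_vsMul_col {n : ℕ} (v : ℕ → Fin n → A) (a : ℕ → A) (i : Fin n) :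
    (fun m => D.vsMul n v a m i) = D.mul (fun m => v m i) a := by
  funext m
  simp [FormalDeformation.vsMul, FormalDeformation.mul, fdConv, Finset.sum_apply]

theorem fd_matMul_entry {n : ℕ} (L S : ℕ → Matrix (Fin n) (Fin n) A) (i j : Fin n) :
    (fun m => D.matMul n L S m i j) =
      ∑ s, D.mul (fun m => L m i s) fun m => S m s j := by
  funext m
  simp only [FormalDeformation.matMul, FormalDeformation.matC, FormalDeformation.mul,
    fdConv, Finset.sum_apply, Matrix.sum_apply, Matrix.of_apply]
  exact fd_sum_swap3 Finset.univ m fun p q s => D.C p.1 (L q.1 i s) (S q.2 s j)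

theorem fd_mv_zero {n : ℕ} (P : ℕ → Matrix (Fin n) (Fin n) A) :
    D.mvMul n P 0 = 0 := by
  funext m i
  simp [FormalDeformation.mvMul, fdConv]

theorem fd_mv_add {n : ℕ} (P : ℕ → Matrix (Fin n) (Fin n) A) (x y : ℕ → Fin n → A) :
    D.mvMul n P (x + y) = D.mvMul n P x + D.mvMul n P y := by
  funext m i
  simp [FormalDeformation.mvMul, fdConv, Finset.sum_apply, Finset.sum_add_distrib]

theorem fd_mv_sum {n : ℕ} (P : ℕ → Matrix (Fin n) (Fin n) A) {ι : Type*} (s : Finset ι)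
    (f : ι → ℕ → Fin n → A) :
    D.mvMul n P (∑ j ∈ s, f j) = ∑ j ∈ s, D.mvMul n P (f j) := by
  induction s using Finset.cons_induction with
  | empty => simpa using fd_mv_zero D P
  | cons a s ha ih => rw [Finset.sum_cons, Finset.sum_cons, fd_mv_add, ih]

theorem fd_assoc (x y z : ℕ → A) :
    D.mul (D.mul x y) z = D.mul x (D.mul y z) := D.assoc x y z

theorem fd_mv_vs {n : ℕ} (Q : ℕ → Matrix (Fin n) (Fin n) A) (v : ℕ → Fin n → A)
    (a : ℕ → A) :
    D.mvMul n Q (D.vsMul n v a) = D.vsMul n (D.mvMul n Q v) a := by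
  apply fd_ext_col
  intro i
  rw [fd_mvMul_col, fd_vsMul_col, fd_mvMul_col, fd_sum_mul]
  simp only [fd_vsMul_col, fd_assoc]

theorem fd_vs_zero {n : ℕ} : D.vsMul n 0 (0 : ℕ → A) = 0 := by
  funext m i
  simp [FormalDeformation.vsMul, fdConv]


theorem fdStar_fdStar_s19 {B : Type*} [InvolutiveStar B] (x : ℕ → B) :
    fdStar (fdStar x) = x := by
  funext m
  exact star_star _

end AuxLemmas

/-- On `qE = P ⋆ Aⁿ[[λ]] = {x : P ⋆ x = x}`, every
`C[[λ]]`-additive map `h'` which is Hermitian-symmetric and right `qA`-linear is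
of the form `h'(x,y) = h(x, H y)` for some right `qA`-linear endomorphism `H` of
`qE` which is Hermitian with respect to the canonical inner product `h`. -/
theorem sesquilinear_form_via_hermitian_operator {C A : Type*} [CommRing C]
    [StarRing C] [Ring A] [Algebra C A] [StarRing A] [StarModule C A]
    (D : FormalDeformation C A) (hD : D.IsHermitian) (n : ℕ)
    (P₀ : Matrix (Fin n) (Fin n) A)
    (hP₀idem : P₀ * P₀ = P₀) (hP₀herm : P₀ᴴ = P₀)
    -- P is a projection of Mₙ(qA) deforming P₀
    (P : ℕ → Matrix (Fin n) (Fin n) A)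
    (hPidem : D.matMul n P P = P) (hPherm : ∀ m, (P m)ᴴ = P m) (hP0 : P 0 = P₀)
    -- h' is a C[[λ]]-additive, Hermitian-symmetric, right qA-linear map on qE
    (h' : (ℕ → Fin n → A) → (ℕ → Fin n → A) → ℕ → A)
    (h'_add_left : ∀ x x' y, D.mvMul n P x = x → D.mvMul n P x' = x' →
      D.mvMul n P y = y → h' (x + x') y = h' x y + h' x' y)
    (h'_add_right : ∀ x y y', D.mvMul n P x = x → D.mvMul n P y = y →
      D.mvMul n P y' = y' → h' x (y + y') = h' x y + h' x y')
    (h'_herm : ∀ x y, D.mvMul n P x = x → D.mvMul n P y = y →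
      fdStar (h' x y) = h' y x)
    (h'_mod : ∀ x y (a : ℕ → A), D.mvMul n P x = x → D.mvMul n P y = y →
      h' x (D.vsMul n y a) = D.mul (h' x y) a) :
    ∃ H : (ℕ → Fin n → A) → ℕ → Fin n → A,
      -- H is an endomorphism of qE
      (∀ x, D.mvMul n P x = x → D.mvMul n P (H x) = H x) ∧
      (∀ x x', D.mvMul n P x = x → D.mvMul n P x' = x' → H (x + x') = H x + H x') ∧
      -- H is right qA-linear
      (∀ x (a : ℕ → A), D.mvMul n P x = x → H (D.vsMul n x a) = D.vsMul n (H x) a) ∧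
      -- H is Hermitian with respect to the canonical inner product h
      (∀ x y, D.mvMul n P x = x → D.mvMul n P y = y →
        canonicalInner D n (H x) y = canonicalInner D n x (H y)) ∧
      -- h' is represented by H
      (∀ x y, D.mvMul n P x = x → D.mvMul n P y = y →
        h' x y = canonicalInner D n x (H y)) := by
  have hu : ∀ j : Fin n, D.mvMul n P (fun m i => P m i j) = fun m i => P m i j := by
    intro j
    apply fd_ext_col
    intro i
    rw [fd_mvMul_col]
    have hq : (∑ s, D.mul (fun m => P m i s) fun m => P m s j) = fun m => P m i j := by
      rw [← fd_matMul_entry]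
      simp only [hPidem]
    exact hq
  have hq : ∀ i j : Fin n,
      (∑ s, D.mul (fun m => P m i s) fun m => P m s j) = fun m => P m i j := by
    intro i j
    rw [← fd_matMul_entry]
    simp only [hPidem]
  have hqstar : ∀ i j : Fin n, fdStar (fun m => P m i j) = fun m => P m j i := by
    intro i j
    funext m
    have h2 : star (P m j i) = P m i j := by
      have h3 := congrFun (congrFun (hPherm m) i) j
      simpa [Matrix.conjTranspose_apply] using h3
    show star (P m i j) = P m j i
    rw [← h2, star_star]
  have hmemsum : ∀ (s : Finset (Fin n)) (f : Fin n → ℕ → Fin n → A),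
      (∀ j ∈ s, D.mvMul n P (f j) = f j) →
      D.mvMul n P (∑ j ∈ s, f j) = ∑ j ∈ s, f j := by
    intro s f hf
    rw [fd_mv_sum]
    exact Finset.sum_congr rfl hf
  have h'zr : ∀ x, D.mvMul n P x = x → h' x 0 = 0 := by
    intro x hx
    have h1 := h'_mod x 0 0 hx (fd_mv_zero D P)
    rw [fd_vs_zero] at h1
    rw [h1, fd_mul_zero]
  have h'sum : ∀ x, D.mvMul n P x = x → ∀ (s : Finset (Fin n))
      (f : Fin n → ℕ → Fin n → A), (∀ j ∈ s, D.mvMul n P (f j) = f j) →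
      h' x (∑ j ∈ s, f j) = ∑ j ∈ s, h' x (f j) := by
    intro x hx s
    induction s using Finset.cons_induction with
    | empty => intro f _; simpa using h'zr x hx
    | cons a s ha ih =>
        intro f hf
        rw [Finset.sum_cons, Finset.sum_cons,
          h'_add_right x (f a) (∑ j ∈ s, f j) hx (hf a (Finset.mem_cons_self a s))
            (hmemsum s f fun j hj => hf j (Finset.mem_cons_of_mem hj)),
          ih f fun j hj => hf j (Finset.mem_cons_of_mem hj)]
  have hdecomp : ∀ x, D.mvMul n P x = x →
      x = ∑ j, D.vsMul n (fun m i => P m i j) fun m => x m j := by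
    intro x hx
    apply fd_ext_col
    intro i
    rw [fd_col_sum]
    simp only [fd_vsMul_col]
    have hx' : (fun m => x m i) = fun m => D.mvMul n P x m i := by rw [hx]
    rw [hx', fd_mvMul_col]
  have key : ∀ x y, D.mvMul n P x = x → D.mvMul n P y = y →
      h' x y = ∑ j, D.mul (fdStar fun m => x m j)
        (h' (fun m' i' => P m' i' j) y) := by
    intro x y hx hy
    have hvsmem : ∀ j : Fin n,
        D.mvMul n P (D.vsMul n (fun m i => P m i j) fun m => x m j)
          = D.vsMul n (fun m i => P m i j) fun m => x m j := fun j => by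
      rw [fd_mv_vs, hu j]
    have e1 : h' y x = ∑ j, D.mul (h' y (fun m i => P m i j)) fun m => x m j := by
      conv_lhs => rw [hdecomp x hx]
      rw [h'sum y hy Finset.univ _ fun j _ => hvsmem j]
      exact Finset.sum_congr rfl fun j _ =>
        h'_mod y (fun m i => P m i j) (fun m => x m j) hy (hu j)
    calc h' x y = fdStar (h' y x) := (h'_herm y x hy hx).symm
      _ = fdStar (∑ j, D.mul (h' y (fun m i => P m i j)) fun m => x m j) := by
          rw [e1]
      _ = ∑ j, fdStar (D.mul (h' y (fun m i => P m i j)) fun m => x m j) :=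
          fdStar_sum _ _
      _ = ∑ j, D.mul (fdStar fun m => x m j)
            (fdStar (h' y (fun m i => P m i j))) :=
          Finset.sum_congr rfl fun j _ => hD _ _
      _ = ∑ j, D.mul (fdStar fun m => x m j) (h' (fun m' i' => P m' i' j) y) :=
          Finset.sum_congr rfl fun j _ => by
            rw [h'_herm y (fun m i => P m i j) hy (hu j)]
  have hstar : ∀ v w : ℕ → Fin n → A,
      fdStar (canonicalInner D n v w) = canonicalInner D n w v := by
    intro v w
    unfold canonicalInner
    rw [fdStar_sum]
    refine Finset.sum_congr rfl fun i _ => ?_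
    rw [hD (fdStar fun m => v m i) fun m => w m i, fdStar_fdStar_s19]
  refine ⟨fun y m i => h' (fun m' i' => P m' i' i) y m, ?_, ?_, ?_, ?_, ?_⟩
  · -- endomorphism of qE
    intro x hx
    apply fd_ext_col
    intro i
    rw [fd_mvMul_col]
    show (∑ j, D.mul (fun m => P m i j) (h' (fun m' i' => P m' i' j) x)) =
      h' (fun m' i' => P m' i' i) x
    have step : ∀ j : Fin n,
        D.mul (fun m => P m i j) (h' (fun m' i' => P m' i' j) x) =
          fdStar (h' x (D.vsMul n (fun m' i' => P m' i' j) fun m => P m j i)) := by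
      intro j
      rw [h'_mod x (fun m' i' => P m' i' j) (fun m => P m j i) hx (hu j),
        hD (h' x fun m' i' => P m' i' j) (fun m => P m j i), hqstar j i,
        h'_herm x (fun m' i' => P m' i' j) hx (hu j)]
    have hsumcol : (∑ j, D.vsMul n (fun m' i' => P m' i' j) fun m => P m j i) =
        fun m' i' => P m' i' i := by
      apply fd_ext_col
      intro kk
      rw [fd_col_sum]
      simp only [fd_vsMul_col]
      exact hq kk i
    calc (∑ j, D.mul (fun m => P m i j) (h' (fun m' i' => P m' i' j) x))
        = ∑ j, fdStar (h' x (D.vsMul n (fun m' i' => P m' i' j) fun m => P m j i)) :=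
          Finset.sum_congr rfl fun j _ => step j
      _ = fdStar (∑ j, h' x (D.vsMul n (fun m' i' => P m' i' j) fun m => P m j i)) :=
          (fdStar_sum _ _).symm
      _ = fdStar (h' x (∑ j, D.vsMul n (fun m' i' => P m' i' j) fun m => P m j i)) := by
          rw [h'sum x hx Finset.univ _ fun j _ => by rw [fd_mv_vs, hu j]]
      _ = fdStar (h' x fun m' i' => P m' i' i) := by rw [hsumcol]
      _ = h' (fun m' i' => P m' i' i) x := h'_herm x (fun m' i' => P m' i' i) hx (hu i)
  · -- additive
    intro x x' hx hx'
    funext m i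
    exact congrFun (h'_add_right (fun m' i' => P m' i' i) x x' (hu i) hx hx') m
  · -- right qA-linear
    intro x a hx
    apply fd_ext_col
    intro i
    rw [fd_vsMul_col]
    exact h'_mod (fun m' i' => P m' i' i) x a (hu i) hx
  · -- Hermitian
    intro x y hx hy
    exact ((hstar y _).symm.trans (congrArg fdStar (key y x hy hx).symm)).trans
      ((h'_herm y x hy hx).trans (key x y hx hy))
  · -- representation
    intro x y hx hy
    exact key x y hx hy
end
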